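/- arXiv:1905.07312 — 5 statements merged into one kernel-verified Lean document; each statement's English description precedes it below -/
import Mathlib

section
/- Let α be a positive integer and β > −1 a real number. Then for every n ∈ ℕ₀ and every x ∈ ℝ, ((1−x)/2)^α P_n^{(α,β)}(x) = Σ_{j=0}^{α} (−1)^j a_j^{(0)}(n) P_{n+j}^{(0,β)}(x), where a_j^{(0)}(n) = α! Γ(n+α+1) (2n+2j+β+1) Γ(2n+j+β+1) / ( j! (α−j)! n! Γ(2n+j+α+β+2) ), and each a_j^{(0)}(n) is positive. -/
open Filter Matrix

/-- Jacobi polynomial `P_n^{(α,β)}(x)`. -/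
noncomputable def jacobiP (α β : ℝ) (n : ℕ) (x : ℝ) : ℝ :=
  (1 / (n.factorial : ℝ)) * ∑ k ∈ Finset.range (n + 1),
    (n.choose k : ℝ) * (∏ i ∈ Finset.Icc (k + 1) n, (α + (i : ℝ))) *
      (∏ j ∈ Finset.Icc 1 k, (α + β + (n : ℝ) + (j : ℝ))) * ((x - 1) / 2) ^ k

/-- The coefficient a_j^{(0)}(n) of the expansion into P^{(0,β)} Jacobi polynomials. -/
noncomputable def a0coef (a : ℕ) (β : ℝ) (n j : ℕ) : ℝ :=
  (a.factorial : ℝ) * Real.Gamma ((n : ℝ) + (a : ℝ) + 1) *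
      (2 * (n : ℝ) + 2 * (j : ℝ) + β + 1) * Real.Gamma (2 * (n : ℝ) + (j : ℝ) + β + 1) /
    ((j.factorial : ℝ) * ((a - j).factorial : ℝ) * (n.factorial : ℝ) *
      Real.Gamma (2 * (n : ℝ) + (j : ℝ) + (a : ℝ) + β + 2))

open Finset

lemma hIco (c : ℝ) (a b : ℕ) :
    ∏ i ∈ Icc a b, (c + (i:ℝ)) = ∏ i ∈ range (b+1-a), (c + ((a+i : ℕ):ℝ)) := by
  rw [← Finset.Ico_add_one_right_eq_Icc, Finset.prod_Ico_eq_prod_range]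

lemma contig (α β x : ℝ) (n : ℕ) :
    (2*(n:ℝ)+α+β+1) * ((1-x)/2 * jacobiP α β n x)
      = ((n:ℝ)+α) * jacobiP (α-1) β n x - ((n:ℝ)+1) * jacobiP (α-1) β (n+1) x := by
  have hfact : (((n+1).factorial : ℕ) : ℝ) = ((n:ℝ)+1) * (n.factorial : ℝ) := by
    rw [Nat.factorial_succ]; push_cast; ring
  have hn0 : ((n.factorial : ℕ) : ℝ) ≠ 0 := by exact_mod_cast n.factorial_ne_zero
  set t : ℝ := (x-1)/2 with ht
  have hx : (1-x)/2 = -t := by rw [ht]; ring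
  set D : ℝ := 2*(n:ℝ)+α+β+1 with hD
  set F : ℕ → ℝ := fun k => (n.choose k : ℝ) * (∏ i ∈ Finset.Icc (k + 1) n, (α + (i : ℝ))) *
      (∏ j ∈ Finset.Icc 1 k, (α + β + (n : ℝ) + (j : ℝ))) with hF
  set G : ℕ → ℝ := fun k => (n.choose k : ℝ) * (∏ i ∈ Finset.Icc (k + 1) n, (α - 1 + (i : ℝ))) *
      (∏ j ∈ Finset.Icc 1 k, (α - 1 + β + (n : ℝ) + (j : ℝ))) with hG
  set H : ℕ → ℝ := fun k => ((n+1).choose k : ℝ) * (∏ i ∈ Finset.Icc (k + 1) (n+1), (α - 1 + (i : ℝ))) *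
      (∏ j ∈ Finset.Icc 1 k, (α - 1 + β + ((n+1 : ℕ) : ℝ) + (j : ℝ))) with hH
  have hj1 : jacobiP α β n x = (1 / (n.factorial : ℝ)) * ∑ k ∈ range (n+1), F k * t ^ k := rfl
  have hj2 : jacobiP (α-1) β n x = (1 / (n.factorial : ℝ)) * ∑ k ∈ range (n+1), G k * t ^ k := rfl
  have hj3 : jacobiP (α-1) β (n+1) x = (1 / ((n+1).factorial : ℝ)) * ∑ k ∈ range (n+2), H k * t ^ k := rfl
  -- the k = 0 boundary
  have h0 : ((n:ℝ)+α) * G 0 = H 0 := by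
    simp only [hG, hH, Nat.choose_zero_right, Nat.cast_one, one_mul, zero_add,
      show Finset.Icc 1 0 = (∅ : Finset ℕ) from by simp, Finset.prod_empty, mul_one]
    rw [Finset.prod_Icc_succ_top (by omega : 1 ≤ n+1)]
    push_cast; ring
  have htop : G (n+1) = 0 := by simp [hG, Nat.choose_succ_self]
  -- the per-term identity
  have step : ∀ k ∈ range (n+1), (-D) * F k = ((n:ℝ)+α) * G (k+1) - H (k+1) := by
    intro k hk
    rw [Finset.mem_range] at hk
    rcases eq_or_lt_of_le (Nat.lt_succ_iff.mp hk) with hkn | hkn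
    · -- k = n
      subst hkn
      simp only [hF, hG, hH, Nat.choose_self, Nat.choose_succ_self, Nat.cast_zero, Nat.cast_one,
        show Finset.Icc (k+1) k = (∅ : Finset ℕ) from by simp,
        show Finset.Icc (k+1+1) k = (∅ : Finset ℕ) from by rw [Finset.Icc_eq_empty]; omega,
        show Finset.Icc (k+1+1) (k+1) = (∅ : Finset ℕ) from by rw [Finset.Icc_eq_empty]; omega,
        Finset.prod_empty, one_mul, mul_one, zero_mul, zero_sub]
      rw [Finset.prod_Icc_succ_top (by omega : 1 ≤ k+1)]
      have : ∏ j ∈ Icc 1 k, (α - 1 + β + ((k+1 : ℕ) : ℝ) + (j:ℝ))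
          = ∏ j ∈ Icc 1 k, (α + β + (k:ℝ) + (j:ℝ)) := by
        apply Finset.prod_congr rfl; intro j _; push_cast; ring
      rw [this]; push_cast; ring
    · -- k < n
      obtain ⟨m, rfl⟩ : ∃ m, n = k+1+m := ⟨n-k-1, by omega⟩
      simp only [hF, hG, hH]
      have hAf : ∏ i ∈ Icc (k+1) (k+1+m), (α + (i:ℝ))
          = (∏ i ∈ range m, (α + ((k+1+i:ℕ):ℝ))) * (α + ((k+1+m:ℕ):ℝ)) := by
        rw [hIco, show (k+1+m+1-(k+1)) = m+1 from by omega, Finset.prod_range_succ]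
      have hAg : ∏ i ∈ Icc (k+1+1) (k+1+m), (α - 1 + (i:ℝ))
          = ∏ i ∈ range m, (α + ((k+1+i:ℕ):ℝ)) := by
        rw [hIco, show (k+1+m+1-(k+1+1)) = m from by omega]
        apply Finset.prod_congr rfl; intro i _; push_cast; ring
      have hAh : ∏ i ∈ Icc (k+1+1) (k+1+m+1), (α - 1 + (i:ℝ))
          = (∏ i ∈ range m, (α + ((k+1+i:ℕ):ℝ))) * (α + ((k+1+m:ℕ):ℝ)) := by
        rw [hIco, show (k+1+m+1+1-(k+1+1)) = m+1 from by omega]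
        rw [show (∏ i ∈ range (m+1), (α - 1 + ((k+1+1+i:ℕ):ℝ)))
            = ∏ i ∈ range (m+1), (α + ((k+1+i:ℕ):ℝ)) from
          Finset.prod_congr rfl (fun i _ => by push_cast; ring), Finset.prod_range_succ]
      have hBg : ∏ j ∈ Icc 1 (k+1), (α - 1 + β + ((k+1+m:ℕ):ℝ) + (j:ℝ))
          = (∏ j ∈ Icc 1 k, (α + β + ((k+1+m:ℕ):ℝ) + (j:ℝ))) * (α + β + ((k+1+m:ℕ):ℝ)) := by
        rw [hIco (α - 1 + β + ((k+1+m:ℕ):ℝ)), show (k+1+1-1) = k+1 from by omega,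
          Finset.prod_range_succ', hIco (α + β + ((k+1+m:ℕ):ℝ)), show (k+1-1) = k from by omega]
        congr 1
        · apply Finset.prod_congr rfl; intro i _; push_cast; ring
        · push_cast; ring
      have hBh : ∏ j ∈ Icc 1 (k+1), (α - 1 + β + ((k+1+m+1:ℕ):ℝ) + (j:ℝ))
          = (∏ j ∈ Icc 1 k, (α + β + ((k+1+m:ℕ):ℝ) + (j:ℝ))) * (α + β + ((k+1+m:ℕ):ℝ) + ((k:ℝ)+1)) := by
        rw [Finset.prod_Icc_succ_top (by omega : 1 ≤ k+1)]
        congr 1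
        · apply Finset.prod_congr rfl; intro j _; push_cast; ring
        · push_cast; ring
      rw [hAf, hAg, hAh, hBg, hBh]
      have hpas : (((k+1+m+1).choose (k+1) : ℕ):ℝ)
          = ((k+1+m).choose k : ℝ) + ((k+1+m).choose (k+1) : ℝ) := by
        exact_mod_cast congrArg (Nat.cast : ℕ → ℝ) (Nat.choose_succ_succ' (k+1+m) k)
      have hrel : ((k:ℝ)+1) * ((k+1+m).choose (k+1) : ℝ) = ((m:ℝ)+1) * ((k+1+m).choose k : ℝ) := by
        have h2 : (k+1+m).choose (k+1) * (k+1) = (k+1+m).choose k * (m+1) := by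
          rw [Nat.choose_succ_right_eq]; congr 1; omega
        have := congrArg (Nat.cast : ℕ → ℝ) h2; push_cast at this; linarith
      set P : ℝ := ∏ i ∈ range m, (α + ((k+1+i:ℕ):ℝ)) with hP
      set Q : ℝ := ∏ j ∈ Icc 1 k, (α + β + ((k+1+m:ℕ):ℝ) + (j:ℝ)) with hQ
      rw [hD]
      push_cast
      linear_combination (P * Q * (α + ((k:ℝ)+1+(m:ℝ))) *
          (α + β + ((k:ℝ)+1+(m:ℝ)) + ((k:ℝ)+1))) * hpas
        + (P * Q * (α + ((k:ℝ)+1+(m:ℝ)))) * hrel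
  have key : ∑ k ∈ range (n+1), (-D * F k * t^(k+1))
      = (∑ k ∈ range (n+1), ((n:ℝ)+α) * G k * t^k) - ∑ k ∈ range (n+2), (H k * t^k) := by
    have e1 : ∑ k ∈ range (n+1), (-D * F k * t^(k+1))
        = ∑ k ∈ range (n+1), ((((n:ℝ)+α) * G (k+1) * t^(k+1)) - H (k+1) * t^(k+1)) := by
      apply Finset.sum_congr rfl; intro k hk
      have hstep := step k hk
      calc -D * F k * t^(k+1) = ((-D) * F k) * t^(k+1) := by ring
        _ = (((n:ℝ)+α) * G (k+1) - H (k+1)) * t^(k+1) := by rw [hstep]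
        _ = _ := by ring
    rw [e1, Finset.sum_sub_distrib]
    have eG : ∑ k ∈ range (n+1), ((n:ℝ)+α) * G k * t^k
        = (∑ k ∈ range n, ((n:ℝ)+α) * G (k+1) * t^(k+1)) + ((n:ℝ)+α) * G 0 * t^0 :=
      Finset.sum_range_succ' (fun k => ((n:ℝ)+α) * G k * t^k) n
    have eG2 : ∑ k ∈ range (n+1), ((n:ℝ)+α) * G (k+1) * t^(k+1)
        = (∑ k ∈ range n, ((n:ℝ)+α) * G (k+1) * t^(k+1)) + ((n:ℝ)+α) * G (n+1) * t^(n+1) :=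
      Finset.sum_range_succ (fun k => ((n:ℝ)+α) * G (k+1) * t^(k+1)) n
    have eH : ∑ k ∈ range (n+2), H k * t^k
        = (∑ k ∈ range (n+1), H (k+1) * t^(k+1)) + H 0 * t^0 :=
      Finset.sum_range_succ' (fun k => H k * t^k) (n+1)
    have h0' : ((n:ℝ)+α) * G 0 * t^0 = H 0 * t^0 := by rw [pow_zero, mul_one, mul_one]; exact h0
    have htop' : ((n:ℝ)+α) * G (n+1) * t^(n+1) = 0 := by rw [htop]; ring
    linarith [eG, eG2, eH, h0', htop']
  have hn1 : ((n:ℝ)+1) ≠ 0 := by positivity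
  rw [hj1, hj2, hj3, hx, hfact]
  have expand1 : D * (-t * (1/(n.factorial:ℝ) * ∑ k ∈ range (n+1), F k * t^k))
      = 1/(n.factorial:ℝ) * ∑ k ∈ range (n+1), (-D * F k * t^(k+1)) := by
    simp only [Finset.mul_sum]; apply Finset.sum_congr rfl; intros; ring
  have expand2 : ((n:ℝ)+α) * (1/(n.factorial:ℝ) * ∑ k ∈ range (n+1), G k * t^k)
      = 1/(n.factorial:ℝ) * ∑ k ∈ range (n+1), ((n:ℝ)+α) * G k * t^k := by
    simp only [Finset.mul_sum]; apply Finset.sum_congr rfl; intros; ring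
  have expand3 : ((n:ℝ)+1) * (1/(((n:ℝ)+1) * (n.factorial:ℝ)) * ∑ k ∈ range (n+2), H k * t^k)
      = 1/(n.factorial:ℝ) * ∑ k ∈ range (n+2), H k * t^k := by
    simp only [Finset.mul_sum]; apply Finset.sum_congr rfl; intros
    field_simp
  rw [expand1, expand2, expand3, key, mul_sub]

lemma a0coef_pos (a : ℕ) {β : ℝ} (hβ : -1 < β) (n j : ℕ) : 0 < a0coef a β n j := by
  rw [a0coef]
  have hn : (0:ℝ) ≤ n := Nat.cast_nonneg n
  have hj : (0:ℝ) ≤ j := Nat.cast_nonneg j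
  have ha : (0:ℝ) ≤ a := Nat.cast_nonneg a
  have g1 : 0 < Real.Gamma ((n:ℝ) + a + 1) := Real.Gamma_pos_of_pos (by linarith)
  have g2 : 0 < Real.Gamma (2*(n:ℝ) + (j:ℝ) + β + 1) := Real.Gamma_pos_of_pos (by linarith)
  have g3 : 0 < Real.Gamma (2*(n:ℝ) + (j:ℝ) + (a:ℝ) + β + 2) := Real.Gamma_pos_of_pos (by linarith)
  have fa : (0:ℝ) < a.factorial := by exact_mod_cast a.factorial_pos
  have fj : (0:ℝ) < j.factorial := by exact_mod_cast j.factorial_pos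
  have fd : (0:ℝ) < (a-j).factorial := by exact_mod_cast (a-j).factorial_pos
  have fn : (0:ℝ) < n.factorial := by exact_mod_cast n.factorial_pos
  exact div_pos (mul_pos (mul_pos (mul_pos fa g1) (by linarith)) g2)
    (mul_pos (mul_pos (mul_pos fj fd) fn) g3)

lemma a0coef_zero {β : ℝ} (hβ : -1 < β) (n : ℕ) : a0coef 0 β n 0 = 1 := by
  simp only [a0coef, Nat.cast_zero, add_zero, Nat.sub_zero, Nat.factorial_zero, Nat.cast_one]
  have hn : (0:ℝ) ≤ n := Nat.cast_nonneg n
  rw [show (2*(n:ℝ) + β + 2) = (2*(n:ℝ) + β + 1) + 1 by ring,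
    Real.Gamma_add_one (s := 2*(n:ℝ) + β + 1) (ne_of_gt (by linarith)),
    Real.Gamma_nat_eq_factorial]
  have g2 : 0 < Real.Gamma (2*(n:ℝ) + β + 1) := Real.Gamma_pos_of_pos (by linarith)
  have fn : (0:ℝ) < n.factorial := by exact_mod_cast n.factorial_pos
  have h1 : (0:ℝ) < 2*(n:ℝ) + β + 1 := by linarith
  have h2 : (0:ℝ) < 2*(n:ℝ) + 2*(0:ℝ) + β + 1 := by linarith
  field_simp
  ring

lemma coefA (a : ℕ) {β : ℝ} (hβ : -1 < β) (n : ℕ) :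
    a0coef (a+1) β n 0 * (2*(n:ℝ)+(a:ℝ)+β+2) = ((n:ℝ)+(a:ℝ)+1) * a0coef a β n 0 := by
  have hn : (0:ℝ) ≤ n := Nat.cast_nonneg n
  have ha : (0:ℝ) ≤ a := Nat.cast_nonneg a
  simp only [a0coef, Nat.sub_zero, Nat.cast_zero, add_zero]
  rw [show ((n:ℝ) + ((a+1:ℕ):ℝ) + 1) = ((n:ℝ) + (a:ℝ) + 1) + 1 by push_cast; ring,
    Real.Gamma_add_one (s := (n:ℝ) + (a:ℝ) + 1) (ne_of_gt (by linarith)),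
    show (2*(n:ℝ) + ((a+1:ℕ):ℝ) + β + 2) = (2*(n:ℝ) + (a:ℝ) + β + 2) + 1 by push_cast; ring,
    Real.Gamma_add_one (s := 2*(n:ℝ) + (a:ℝ) + β + 2) (ne_of_gt (by linarith))]
  have g1 : 0 < Real.Gamma ((n:ℝ) + (a:ℝ) + 1) := Real.Gamma_pos_of_pos (by linarith)
  have g2 : 0 < Real.Gamma (2*(n:ℝ) + β + 1) := Real.Gamma_pos_of_pos (by linarith)
  have g3 : 0 < Real.Gamma (2*(n:ℝ) + (a:ℝ) + β + 2) := Real.Gamma_pos_of_pos (by linarith)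
  have fa : (0:ℝ) < a.factorial := by exact_mod_cast a.factorial_pos
  have fn : (0:ℝ) < n.factorial := by exact_mod_cast n.factorial_pos
  have h3 : (0:ℝ) < 2*(n:ℝ) + (a:ℝ) + β + 2 := by linarith
  simp only [Nat.factorial_succ]
  push_cast
  field_simp [g1.ne', g2.ne', g3.ne', fa.ne', fn.ne', h3.ne']
  have hD' : ((n:ℝ) * 2 + a + β + 2) ≠ 0 := by linarith
  have hG' : Real.Gamma ((n:ℝ) * 2 + a + β + 2) ≠ 0 := by
    rw [show (n:ℝ) * 2 + a + β + 2 = 2 * n + a + β + 2 by ring]; exact g3.ne'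
  rw [div_eq_div_iff (mul_ne_zero hD' hG') hG']
  ring

lemma coefC (a : ℕ) {β : ℝ} (hβ : -1 < β) (n : ℕ) :
    a0coef (a+1) β n (a+1) * (2*(n:ℝ)+(a:ℝ)+β+2) = ((n:ℝ)+1) * a0coef a β (n+1) a := by
  have hn : (0:ℝ) ≤ n := Nat.cast_nonneg n
  have ha : (0:ℝ) ≤ a := Nat.cast_nonneg a
  simp only [a0coef, Nat.sub_self]
  rw [show ((n:ℝ) + ((a+1:ℕ):ℝ) + 1) = ((n:ℝ) + (a:ℝ) + 2) by push_cast; ring,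
    show (((n+1:ℕ)):ℝ) + (a:ℝ) + 1 = ((n:ℝ) + (a:ℝ) + 2) by push_cast; ring,
    show (2*(n:ℝ) + ((a+1:ℕ):ℝ) + β + 1) = (2*(n:ℝ) + (a:ℝ) + β + 2) by push_cast; ring,
    show (2*((n+1:ℕ):ℝ) + (a:ℝ) + β + 1) = (2*(n:ℝ) + (a:ℝ) + β + 2) + 1 by push_cast; ring,
    Real.Gamma_add_one (s := 2*(n:ℝ) + (a:ℝ) + β + 2) (ne_of_gt (by linarith)),
    show (2*(n:ℝ) + ((a+1:ℕ):ℝ) + ((a+1:ℕ):ℝ) + β + 2) = (2*(n:ℝ) + 2*(a:ℝ) + β + 4) by push_cast; ring,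
    show (2*((n+1:ℕ):ℝ) + (a:ℝ) + (a:ℝ) + β + 2) = (2*(n:ℝ) + 2*(a:ℝ) + β + 4) by push_cast; ring]
  have g1 : 0 < Real.Gamma ((n:ℝ) + (a:ℝ) + 2) := Real.Gamma_pos_of_pos (by linarith)
  have g2 : 0 < Real.Gamma (2*(n:ℝ) + (a:ℝ) + β + 2) := Real.Gamma_pos_of_pos (by linarith)
  have g3 : 0 < Real.Gamma (2*(n:ℝ) + 2*(a:ℝ) + β + 4) := Real.Gamma_pos_of_pos (by linarith)
  have fa : (0:ℝ) < a.factorial := by exact_mod_cast a.factorial_pos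
  have fn : (0:ℝ) < n.factorial := by exact_mod_cast n.factorial_pos
  have h2 : (0:ℝ) < 2*(n:ℝ) + (a:ℝ) + β + 2 := by linarith
  simp only [Nat.factorial_succ, Nat.factorial_zero]
  push_cast
  field_simp [g1.ne', g2.ne', g3.ne', fa.ne', fn.ne', h2.ne']
  ring

lemma coefB (a : ℕ) {β : ℝ} (hβ : -1 < β) (n j : ℕ) (hj : j < a) :
    a0coef (a+1) β n (j+1) * (2*(n:ℝ)+(a:ℝ)+β+2)
      = ((n:ℝ)+(a:ℝ)+1) * a0coef a β n (j+1) + ((n:ℝ)+1) * a0coef a β (n+1) j := by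
  have hn : (0:ℝ) ≤ n := Nat.cast_nonneg n
  have hjr : (0:ℝ) ≤ j := Nat.cast_nonneg j
  obtain ⟨d, rfl⟩ : ∃ d, a = j+1+d := ⟨a-j-1, by omega⟩
  have hd : (0:ℝ) ≤ d := Nat.cast_nonneg d
  simp only [a0coef, show (j+1+d+1) - (j+1) = d+1 from by omega,
    show (j+1+d) - (j+1) = d from by omega, show (j+1+d) - j = d+1 from by omega]
  rw [show ((n:ℝ) + ((j+1+d+1:ℕ):ℝ) + 1) = ((n:ℝ) + (j:ℝ) + (d:ℝ) + 2) + 1 by push_cast; ring,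
    Real.Gamma_add_one (s := (n:ℝ) + (j:ℝ) + (d:ℝ) + 2) (ne_of_gt (by linarith)),
    show ((n:ℝ) + ((j+1+d:ℕ):ℝ) + 1) = ((n:ℝ) + (j:ℝ) + (d:ℝ) + 2) by push_cast; ring,
    show (((n+1:ℕ)):ℝ) + ((j+1+d:ℕ):ℝ) + 1 = ((n:ℝ) + (j:ℝ) + (d:ℝ) + 2) + 1 by push_cast; ring,
    Real.Gamma_add_one (s := (n:ℝ) + (j:ℝ) + (d:ℝ) + 2) (ne_of_gt (by linarith)),
    show (2*(n:ℝ) + ((j+1:ℕ):ℝ) + β + 1) = (2*(n:ℝ) + (j:ℝ) + β + 2) by push_cast; ring,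
    show (2*((n+1:ℕ):ℝ) + (j:ℝ) + β + 1) = (2*(n:ℝ) + (j:ℝ) + β + 2) + 1 by push_cast; ring,
    Real.Gamma_add_one (s := 2*(n:ℝ) + (j:ℝ) + β + 2) (ne_of_gt (by linarith)),
    show (2*(n:ℝ) + ((j+1:ℕ):ℝ) + ((j+1+d+1:ℕ):ℝ) + β + 2) = (2*(n:ℝ) + 2*(j:ℝ) + (d:ℝ) + β + 4) + 1 by push_cast; ring,
    Real.Gamma_add_one (s := 2*(n:ℝ) + 2*(j:ℝ) + (d:ℝ) + β + 4) (ne_of_gt (by linarith)),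
    show (2*(n:ℝ) + ((j+1:ℕ):ℝ) + ((j+1+d:ℕ):ℝ) + β + 2) = (2*(n:ℝ) + 2*(j:ℝ) + (d:ℝ) + β + 4) by push_cast; ring,
    show (2*((n+1:ℕ):ℝ) + (j:ℝ) + ((j+1+d:ℕ):ℝ) + β + 2) = (2*(n:ℝ) + 2*(j:ℝ) + (d:ℝ) + β + 4) + 1 by push_cast; ring,
    Real.Gamma_add_one (s := 2*(n:ℝ) + 2*(j:ℝ) + (d:ℝ) + β + 4) (ne_of_gt (by linarith))]
  have g1 : 0 < Real.Gamma ((n:ℝ) + (j:ℝ) + (d:ℝ) + 2) := Real.Gamma_pos_of_pos (by linarith)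
  have g2 : 0 < Real.Gamma (2*(n:ℝ) + (j:ℝ) + β + 2) := Real.Gamma_pos_of_pos (by linarith)
  have g3 : 0 < Real.Gamma (2*(n:ℝ) + 2*(j:ℝ) + (d:ℝ) + β + 4) := Real.Gamma_pos_of_pos (by linarith)
  have fj : (0:ℝ) < j.factorial := by exact_mod_cast j.factorial_pos
  have fd : (0:ℝ) < d.factorial := by exact_mod_cast d.factorial_pos
  have fn : (0:ℝ) < n.factorial := by exact_mod_cast n.factorial_pos
  have fjd : (0:ℝ) < (j+1+d).factorial := by exact_mod_cast (j+1+d).factorial_pos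
  have h3 : (0:ℝ) < 2*(n:ℝ) + 2*(j:ℝ) + (d:ℝ) + β + 4 := by linarith
  simp only [Nat.factorial_succ]
  push_cast
  field_simp [g1.ne', g2.ne', g3.ne', fj.ne', fd.ne', fn.ne', fjd.ne', h3.ne']
  have hE' : (((n:ℝ) + j) * 2 + d + β + 4) ≠ 0 := by linarith
  have hG' : Real.Gamma (((n:ℝ) + j) * 2 + d + β + 4) ≠ 0 := by
    rw [show ((n:ℝ) + j) * 2 + d + β + 4 = 2 * n + 2 * j + d + β + 4 by ring]; exact g3.ne'
  rw [div_eq_div_iff (mul_ne_zero hE' hG') hG', add_div' _ _ _ hE', mul_div_assoc', div_mul_eq_mul_div, eq_div_iff hE']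
  ring

lemma jacobi_key {β : ℝ} (hβ : -1 < β) : ∀ (a n : ℕ) (x : ℝ),
    ((1-x)/2)^a * jacobiP (a:ℝ) β n x
      = ∑ j ∈ Finset.range (a+1), (-1:ℝ)^j * a0coef a β n j * jacobiP 0 β (n+j) x := by
  intro a
  induction a with
  | zero =>
    intro n x
    simp [a0coef_zero hβ]
  | succ a ih =>
    intro n x
    have hn : (0:ℝ) ≤ n := Nat.cast_nonneg n
    have ha : (0:ℝ) ≤ a := Nat.cast_nonneg a
    have hD : (0:ℝ) < 2*(n:ℝ)+(a:ℝ)+β+2 := by linarith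
    have hcontig := contig ((a:ℝ)+1) β x n
    rw [show ((a:ℝ)+1-1) = (a:ℝ) by ring] at hcontig
    rw [show (((a+1:ℕ)):ℝ) = (a:ℝ)+1 by push_cast; ring]
    have hsplit : ((1-x)/2)^(a+1) * jacobiP ((a:ℝ)+1) β n x
        = ((((n:ℝ)+(a:ℝ)+1) * (((1-x)/2)^a * jacobiP (a:ℝ) β n x)
           - ((n:ℝ)+1) * (((1-x)/2)^a * jacobiP (a:ℝ) β (n+1) x)) / (2*(n:ℝ)+(a:ℝ)+β+2)) := by
      rw [eq_div_iff hD.ne']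
      linear_combination (((1-x)/2)^a) * hcontig
    rw [hsplit, ih n x, ih (n+1) x, div_eq_iff hD.ne']
    have hidx : ∀ j : ℕ, jacobiP 0 β (n+1+j) x = jacobiP 0 β (n+(j+1)) x := by
      intro j; congr 1; omega
    have EQ : ∑ j ∈ Finset.range (a+1+1), ((-1:ℝ)^j * a0coef (a+1) β n j * jacobiP 0 β (n+j) x) * (2*(n:ℝ)+(a:ℝ)+β+2)
        = (((n:ℝ)+(a:ℝ)+1) * ∑ j ∈ Finset.range (a+1), (-1:ℝ)^j * a0coef a β n j * jacobiP 0 β (n+j) x)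
          - (((n:ℝ)+1) * ∑ j ∈ Finset.range (a+1), (-1:ℝ)^j * a0coef a β (n+1) j * jacobiP 0 β ((n+1)+j) x) := by
      rw [Finset.mul_sum, Finset.mul_sum]
      set f : ℕ → ℝ := fun j => ((-1:ℝ)^j * a0coef (a+1) β n j * jacobiP 0 β (n+j) x) * (2*(n:ℝ)+(a:ℝ)+β+2) with hf
      set g : ℕ → ℝ := fun j => ((n:ℝ)+(a:ℝ)+1) * ((-1:ℝ)^j * a0coef a β n j * jacobiP 0 β (n+j) x) with hg
      set h : ℕ → ℝ := fun j => ((n:ℝ)+1) * ((-1:ℝ)^j * a0coef a β (n+1) j * jacobiP 0 β ((n+1)+j) x) with hh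
      have e1 : ∑ j ∈ Finset.range (a+1+1), f j = (∑ j ∈ Finset.range a, f (j+1)) + f 0 + f (a+1) := by
        rw [Finset.sum_range_succ, Finset.sum_range_succ' f a]
      have e2 : ∑ j ∈ Finset.range (a+1), g j = (∑ j ∈ Finset.range a, g (j+1)) + g 0 :=
        Finset.sum_range_succ' g a
      have e3 : ∑ j ∈ Finset.range (a+1), h j = (∑ j ∈ Finset.range a, h j) + h a :=
        Finset.sum_range_succ h a
      have h0 : f 0 = g 0 := by
        simp only [hf, hg]
        simp only [pow_zero, one_mul]
        rw [mul_comm (a0coef (a+1) β n 0) (jacobiP 0 β (n+0) x)]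
        rw [mul_assoc, coefA a hβ n]; ring
      have htop : f (a+1) = -(h a) := by
        simp only [hf, hh, hidx a]
        rw [mul_assoc ((-1:ℝ)^(a+1) * a0coef (a+1) β n (a+1)), mul_comm (jacobiP 0 β (n+(a+1)) x),
          ← mul_assoc, mul_assoc ((-1:ℝ)^(a+1)), coefC a hβ n, pow_succ]
        ring
      have hstep : ∀ j ∈ Finset.range a, f (j+1) = g (j+1) - h j := by
        intro j hj
        rw [Finset.mem_range] at hj
        simp only [hf, hg, hh, hidx j]
        rw [mul_assoc ((-1:ℝ)^(j+1) * a0coef (a+1) β n (j+1)), mul_comm (jacobiP 0 β (n+(j+1)) x),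
          ← mul_assoc, mul_assoc ((-1:ℝ)^(j+1)), coefB a hβ n j hj, pow_succ]
        ring
      rw [e1, e2, e3, Finset.sum_congr rfl hstep, Finset.sum_sub_distrib]
      linarith [h0, htop]
    calc (((n:ℝ)+(a:ℝ)+1) * ∑ j ∈ Finset.range (a+1), (-1:ℝ)^j * a0coef a β n j * jacobiP 0 β (n+j) x)
          - (((n:ℝ)+1) * ∑ j ∈ Finset.range (a+1), (-1:ℝ)^j * a0coef a β (n+1) j * jacobiP 0 β ((n+1)+j) x)
        = ∑ j ∈ Finset.range (a+1+1), ((-1:ℝ)^j * a0coef (a+1) β n j * jacobiP 0 β (n+j) x) * (2*(n:ℝ)+(a:ℝ)+β+2) := EQ.symm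
      _ = (∑ j ∈ Finset.range (a+1+1), (-1:ℝ)^j * a0coef (a+1) β n j * jacobiP 0 β (n+j) x) * (2*(n:ℝ)+(a:ℝ)+β+2) := by
          rw [Finset.sum_mul]

/-- Expansion of ((1-x)/2)^α P_n^{(α,β)}(x) into the polynomials P_{n+j}^{(0,β)},
with positive coefficients a_j^{(0)}(n), for a positive integer α. -/
theorem stmt3 (a : ℕ) (ha : 1 ≤ a) (β : ℝ) (hβ : -1 < β) (n : ℕ) (x : ℝ) :
    (((1 - x) / 2) ^ a * jacobiP (a : ℝ) β n x =
      ∑ j ∈ Finset.range (a + 1), (-1 : ℝ) ^ j * a0coef a β n j * jacobiP 0 β (n + j) x)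
    ∧ ∀ j ∈ Finset.range (a + 1), 0 < a0coef a β n j := by
  exact ⟨jacobi_key hβ a n x, fun j _ => a0coef_pos a hβ n j⟩
end

section
/- Let m ≥ 1, let d ≥ 4 be even, set α = (d−2)/2, and let C : [0,π] → ℝ^{m×m} be a symmetric-matrix-valued function with continuous entries. If H_n^{(α,0)}(C) is positive semidefinite for every n ∈ ℕ₀ and Σ_{n=1}^∞ n^{α+1} H_n^{(α,0)}(C) converges entrywise, then: (a) H_n^{(α,α)}(C) is positive semidefinite for every n ∈ ℕ₀ and Σ_{n=1}^∞ n^{α+1} H_n^{(α,α)}(C) converges entrywise; (b) if moreover d ∈ {8,12,16,...}, then H_n^{(α,1)}(C) is positive semidefinite for every n ∈ ℕ₀ and Σ_{n=1}^∞ n^{α+1} H_n^{(α,1)}(C) converges entrywise. (By Theorem 1 this says: an isotropic covariance matrix function on the complex projective space P^d(ℂ) is one on the sphere S^d, and, for d ∈ {8,12,...}, one on the quaternionic projective space P^d(ℍ).) -/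
open Filter Matrix

/-- The matrix `H_n^{(α,β)}(C)`, defined entrywise by an interval integral. -/
noncomputable def Hmat {m : ℕ} (α β : ℝ) (C : ℝ → Matrix (Fin m) (Fin m) ℝ) (n : ℕ) :
    Matrix (Fin m) (Fin m) ℝ :=
  Matrix.of fun i j => ∫ θ in (0:ℝ)..Real.pi,
    C θ i j * jacobiP α β n (Real.cos θ) *
      (Real.sin (θ / 2)) ^ (2 * α + 1) * (Real.cos (θ / 2)) ^ (2 * β + 1)

/-- Positive semidefiniteness in the quadratic-form sense. -/
def PSD {m : ℕ} (A : Matrix (Fin m) (Fin m) ℝ) : Prop :=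
  ∀ v : Fin m → ℝ, 0 ≤ v ⬝ᵥ A.mulVec v

/-- The series `Σ_{n=0}^∞ f n` converges (partial sums) to `L`. -/
def SeriesTo (f : ℕ → ℝ) (L : ℝ) : Prop :=
  Filter.Tendsto (fun N => ∑ n ∈ Finset.range N, f n) Filter.atTop (nhds L)

/-- The series `Σ_{n=0}^∞ f n` converges. -/
def SeriesConv (f : ℕ → ℝ) : Prop := ∃ L, SeriesTo f L

noncomputable def Pprod (α : ℝ) (n k : ℕ) : ℝ := ∏ i ∈ Finset.Icc (k+1) n, (α + (i:ℝ))
noncomputable def Qprod (c : ℝ) (k : ℕ) : ℝ := ∏ j ∈ Finset.Icc 1 k, (c + (j:ℝ))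

lemma Qprod_zero (c : ℝ) : Qprod c 0 = 1 := by simp [Qprod]

lemma Qprod_succ (c : ℝ) (k : ℕ) : Qprod c (k+1) = Qprod c k * (c + (k+1 : ℕ)) := by
  unfold Qprod; exact Finset.prod_Icc_succ_top (by omega) _

lemma Qprod_shift (c : ℝ) (k : ℕ) : Qprod c (k+1) = (c+1) * Qprod (c+1) k := by
  induction k with
  | zero => simp [Qprod_succ, Qprod_zero]
  | succ k ih =>
      rw [Qprod_succ, ih, Qprod_succ]
      push_cast; ring

lemma Pprod_top (α : ℝ) (n k : ℕ) (h : k ≤ n) :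
    Pprod α (n+1) k = Pprod α n k * (α + (n+1 : ℕ)) := by
  unfold Pprod; exact Finset.prod_Icc_succ_top (by omega) _

lemma Pprod_bot (α : ℝ) (n k : ℕ) (h : k + 1 ≤ n) :
    Pprod α n k = (α + (k+1 : ℕ)) * Pprod α n (k+1) := by
  unfold Pprod
  rw [← Finset.Ico_add_one_right_eq_Icc, ← Finset.Ico_add_one_right_eq_Icc,
    Finset.prod_eq_prod_Ico_succ_bot (by omega)]

lemma Pprod_self (α : ℝ) (n : ℕ) : Pprod α n n = 1 := by
  unfold Pprod; rw [Finset.Icc_eq_empty (by omega)]; simp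

lemma jacobiP_eq (α β : ℝ) (n : ℕ) (x : ℝ) :
    jacobiP α β n x = (1 / (n.factorial : ℝ)) * ∑ k ∈ Finset.range (n + 1),
      (n.choose k : ℝ) * Pprod α n k * Qprod (α+β+(n:ℝ)) k * ((x - 1) / 2) ^ k := by
  rfl
lemma jacobiP_rec (α β : ℝ) (n : ℕ) (x : ℝ) :
    (2*(n:ℝ)+α+β+2) * ((1+x)/2) * jacobiP α (β+1) n x
      = ((n:ℝ)+β+1) * jacobiP α β n x + ((n:ℝ)+1) * jacobiP α β (n+1) x := by
  have hx : (1+x)/2 = 1 + (x-1)/2 := by ring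
  set t := (x-1)/2 with ht
  -- coefficient functions
  set g : ℕ → ℝ := fun k => (n.choose k : ℝ) * Pprod α n k * Qprod (α+β+(n:ℝ)+1) k with hgdef
  set f : ℕ → ℝ := fun k => (n.choose k : ℝ) * Pprod α n k * Qprod (α+β+(n:ℝ)) k with hfdef
  set h : ℕ → ℝ := fun k => ((n+1).choose k : ℝ) * Pprod α (n+1) k * Qprod (α+β+(n:ℝ)+1) k with hhdef
  set G : ℕ → ℝ := fun k => match k with | 0 => 0 | (k'+1) => g k' * t^(k'+1) with hGdef
  have e1 : jacobiP α (β+1) n x = (1 / (n.factorial : ℝ)) * ∑ k ∈ Finset.range (n+1), g k * t ^ k := by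
    rw [jacobiP_eq]
    congr 1
    refine Finset.sum_congr rfl fun k _ => ?_
    rw [hgdef]
    have : α + (β+1) + (n:ℝ) = α + β + (n:ℝ) + 1 := by ring
    rw [this]
  have e2 : jacobiP α β n x = (1 / (n.factorial : ℝ)) * ∑ k ∈ Finset.range (n+1), f k * t ^ k := by
    rw [jacobiP_eq]
  have e3 : jacobiP α β (n+1) x = (1 / ((n+1).factorial : ℝ)) * ∑ k ∈ Finset.range (n+2), h k * t ^ k := by
    rw [jacobiP_eq]
    congr 1
    refine Finset.sum_congr rfl fun k _ => ?_
    rw [hhdef]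
    have : α + β + ((n:ℝ)+1) = α + β + (n:ℝ) + 1 := by ring
    push_cast
    rw [this]
  -- extend sums to range (n+2)
  have hg_ext : ∑ k ∈ Finset.range (n+1), g k * t ^ k = ∑ k ∈ Finset.range (n+2), g k * t ^ k := by
    rw [Finset.sum_range_succ (fun k => g k * t^k) (n+1)]
    simp [hgdef, Nat.choose_succ_self]
  have hf_ext : ∑ k ∈ Finset.range (n+1), f k * t ^ k = ∑ k ∈ Finset.range (n+2), f k * t ^ k := by
    rw [Finset.sum_range_succ (fun k => f k * t^k) (n+1)]
    simp [hfdef, Nat.choose_succ_self]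
  have hshift : (∑ k ∈ Finset.range (n+1), g k * t ^ k) * t = ∑ k ∈ Finset.range (n+2), G k := by
    rw [Finset.sum_range_succ' G (n+1)]
    have hG0 : G 0 = 0 := rfl
    rw [hG0, add_zero, Finset.sum_mul]
    refine Finset.sum_congr rfl fun k _ => ?_
    show g k * t ^ k * t = g k * t ^ (k+1)
    rw [pow_succ]; ring
  -- the per-coefficient identity
  have key : ∀ k ∈ Finset.range (n+2),
      (2*(n:ℝ)+α+β+2) * (g k * t^k + G k)
        = ((n:ℝ)+β+1) * (f k * t^k) + h k * t^k := by
    intro k hk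
    rw [Finset.mem_range] at hk
    match k with
    | 0 =>
      simp only [hGdef, hgdef, hfdef, hhdef]
      have hp : Pprod α (n+1) 0 = Pprod α n 0 * (α + ((n+1:ℕ):ℝ)) := Pprod_top α n 0 (by omega)
      simp only [Nat.choose_zero_right, Nat.cast_one, Qprod_zero, hp]
      push_cast
      ring
    | (k'+1) =>
      by_cases hkn : k' = n
      · subst hkn
        simp only [hGdef, hgdef, hfdef, hhdef, Nat.choose_succ_self, Nat.choose_self,
          Nat.cast_zero, Nat.cast_one, Pprod_self]
        rw [Qprod_succ]
        push_cast
        ring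
      · have hk'n : k' + 1 ≤ n := by omega
        simp only [hGdef, hgdef, hfdef, hhdef]
        have A1 : Pprod α n k' = (α + ((k'+1:ℕ):ℝ)) * Pprod α n (k'+1) := Pprod_bot α n k' hk'n
        have A2 : Pprod α (n+1) (k'+1) = Pprod α n (k'+1) * (α + ((n+1:ℕ):ℝ)) := Pprod_top α n (k'+1) hk'n
        have A3 : Qprod (α+β+(n:ℝ)+1) (k'+1) = Qprod (α+β+(n:ℝ)+1) k' * ((α+β+(n:ℝ)+1) + ((k'+1:ℕ):ℝ)) := Qprod_succ _ k'
        have A4 : Qprod (α+β+(n:ℝ)) (k'+1) = (α+β+(n:ℝ)+1) * Qprod (α+β+(n:ℝ)+1) k' := Qprod_shift _ k'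
        have A5 : (((n+1).choose (k'+1) : ℕ) : ℝ) = (n.choose k' : ℝ) + (n.choose (k'+1) : ℝ) := by
          rw [Nat.choose_succ_succ]; push_cast; ring
        have hrel : ((k':ℝ)+1) * (n.choose (k'+1) : ℝ) = ((n:ℝ) - (k':ℝ)) * (n.choose k' : ℝ) := by
          have := Nat.choose_succ_right_eq n k'
          have h2 : ((n.choose (k'+1) * (k'+1) : ℕ) : ℝ) = ((n.choose k' * (n - k') : ℕ) : ℝ) := by
            exact_mod_cast congrArg (Nat.cast : ℕ → ℝ) this
          push_cast [Nat.cast_sub (by omega : k' ≤ n)] at h2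
          linarith [h2]
        rw [A1, A2, A3, A4, A5]
        push_cast
        linear_combination ((β+(n:ℝ)+1) * Pprod α n (k'+1) * Qprod (α+β+(n:ℝ)+1) k' * t^(k'+1)) * hrel
  have main : (2*(n:ℝ)+α+β+2) * ((1+t) * ∑ k ∈ Finset.range (n+1), g k * t ^ k)
      = ((n:ℝ)+β+1) * ∑ k ∈ Finset.range (n+1), f k * t ^ k + ∑ k ∈ Finset.range (n+2), h k * t ^ k := by
    have lhs_eq : (1+t) * ∑ k ∈ Finset.range (n+1), g k * t ^ k
        = ∑ k ∈ Finset.range (n+2), (g k * t^k + G k) := by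
      rw [Finset.sum_add_distrib, ← hg_ext, ← hshift]
      ring
    rw [lhs_eq, hf_ext, Finset.mul_sum, Finset.mul_sum, ← Finset.sum_add_distrib]
    exact Finset.sum_congr rfl key
  -- assemble
  rw [e1, e2, e3, hx]
  have hfact : ((n:ℝ)+1) * (1 / ((n+1).factorial : ℝ)) = 1 / (n.factorial : ℝ) := by
    rw [Nat.factorial_succ]
    have h1 : (n.factorial : ℝ) ≠ 0 := Nat.cast_ne_zero.mpr n.factorial_ne_zero
    push_cast
    field_simp
  have hne : ((n+1).factorial : ℝ) ≠ 0 := Nat.cast_ne_zero.mpr (n+1).factorial_ne_zero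
  have hne2 : (n.factorial : ℝ) ≠ 0 := Nat.cast_ne_zero.mpr n.factorial_ne_zero
  calc (2*(n:ℝ)+α+β+2) * (1 + t) * ((1 / (n.factorial : ℝ)) * ∑ k ∈ Finset.range (n+1), g k * t ^ k)
      = (1 / (n.factorial : ℝ)) * ((2*(n:ℝ)+α+β+2) * ((1+t) * ∑ k ∈ Finset.range (n+1), g k * t ^ k)) := by ring
    _ = (1 / (n.factorial : ℝ)) * (((n:ℝ)+β+1) * ∑ k ∈ Finset.range (n+1), f k * t ^ k + ∑ k ∈ Finset.range (n+2), h k * t ^ k) := by rw [main]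
    _ = ((n:ℝ)+β+1) * ((1 / (n.factorial : ℝ)) * ∑ k ∈ Finset.range (n+1), f k * t ^ k) + ((n:ℝ)+1) * ((1 / ((n+1).factorial : ℝ)) * ∑ k ∈ Finset.range (n+2), h k * t ^ k) := by
        rw [← hfact]; ring
lemma jacobiP_continuous (α β : ℝ) (n : ℕ) : Continuous fun x => jacobiP α β n x := by
  unfold jacobiP
  refine continuous_const.mul (continuous_finset_sum _ fun k _ => ?_)
  exact continuous_const.mul (((continuous_id.sub continuous_const).div_const 2).pow k)

lemma integrand_continuous (α β : ℝ) (hα : 0 < 2*α+1) (hβ : 0 < 2*β+1)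
    (c : ℝ → ℝ) (hc : ContinuousOn c (Set.Icc 0 Real.pi)) (n : ℕ) :
    ContinuousOn (fun θ => c θ * jacobiP α β n (Real.cos θ) *
      (Real.sin (θ / 2)) ^ (2 * α + 1) * (Real.cos (θ / 2)) ^ (2 * β + 1))
      (Set.Icc 0 Real.pi) := by
  have h1 : Continuous fun θ : ℝ => jacobiP α β n (Real.cos θ) :=
    (jacobiP_continuous α β n).comp Real.continuous_cos
  have h2 : Continuous fun θ : ℝ => (Real.sin (θ / 2)) ^ (2 * α + 1) :=
    (Real.continuous_sin.comp (continuous_id.div_const 2)).rpow_const fun _ => Or.inr hα.le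
  have h3 : Continuous fun θ : ℝ => (Real.cos (θ / 2)) ^ (2 * β + 1) :=
    (Real.continuous_cos.comp (continuous_id.div_const 2)).rpow_const fun _ => Or.inr hβ.le
  exact ((hc.mul h1.continuousOn).mul h2.continuousOn).mul h3.continuousOn

lemma integrand_intervalIntegrable (α β : ℝ) (hα : 0 < 2*α+1) (hβ : 0 < 2*β+1)
    (c : ℝ → ℝ) (hc : ContinuousOn c (Set.Icc 0 Real.pi)) (n : ℕ) :
    IntervalIntegrable (fun θ => c θ * jacobiP α β n (Real.cos θ) *
      (Real.sin (θ / 2)) ^ (2 * α + 1) * (Real.cos (θ / 2)) ^ (2 * β + 1))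
      MeasureTheory.volume 0 Real.pi := by
  apply ContinuousOn.intervalIntegrable
  rw [Set.uIcc_of_le Real.pi_pos.le]
  exact integrand_continuous α β hα hβ c hc n

lemma Hmat_rec_entry {m : ℕ} (α β : ℝ) (hα : 0 ≤ α) (hβ : 0 ≤ β)
    (C : ℝ → Matrix (Fin m) (Fin m) ℝ)
    (hcont : ∀ i j, ContinuousOn (fun θ => C θ i j) (Set.Icc 0 Real.pi))
    (n : ℕ) (i j : Fin m) :
    (2*(n:ℝ)+α+β+2) * Hmat α (β+1) C n i j
      = ((n:ℝ)+β+1) * Hmat α β C n i j + ((n:ℝ)+1) * Hmat α β C (n+1) i j := by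
  have hβ1 : (0:ℝ) < 2*β+1 := by linarith
  have hα1 : (0:ℝ) < 2*α+1 := by linarith
  have h1 := integrand_intervalIntegrable α β hα1 hβ1 (fun θ => C θ i j) (hcont i j) n
  have h2 := integrand_intervalIntegrable α β hα1 hβ1 (fun θ => C θ i j) (hcont i j) (n+1)
  simp only [Hmat, Matrix.of_apply]
  rw [← intervalIntegral.integral_const_mul, ← intervalIntegral.integral_const_mul,
      ← intervalIntegral.integral_const_mul,
      ← intervalIntegral.integral_add (h1.const_mul _) (h2.const_mul _)]
  apply intervalIntegral.integral_congr
  intro θ hθ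
  rw [Set.uIcc_of_le Real.pi_pos.le] at hθ
  obtain ⟨h0, hπ⟩ := hθ
  have hcos : 0 ≤ Real.cos (θ/2) :=
    Real.cos_nonneg_of_mem_Icc ⟨by linarith [Real.pi_pos], by linarith⟩
  have hpow : Real.cos (θ/2) ^ (2*(β+1)+1) = Real.cos (θ/2) ^ (2*β+1) * ((1+Real.cos θ)/2) := by
    have h1' : 2*(β+1)+1 = (2*β+1) + (2:ℝ) := by ring
    rw [h1', Real.rpow_add' hcos (by linarith : (2*β+1)+(2:ℝ) ≠ 0)]
    congr 1
    rw [show ((2:ℝ) = ((2:ℕ):ℝ)) by norm_num, Real.rpow_natCast, Real.cos_sq]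
    push_cast
    rw [show 2*(θ/2) = θ by ring]
    ring
  have hrec := jacobiP_rec α β n (Real.cos θ)
  simp only
  rw [hpow]
  linear_combination (C θ i j * Real.sin (θ/2) ^ (2*α+1) * Real.cos (θ/2) ^ (2*β+1)) * hrec

lemma Hmat_symm_entry {m : ℕ} (α β : ℝ)
    (C : ℝ → Matrix (Fin m) (Fin m) ℝ)
    (hsym : ∀ θ ∈ Set.Icc (0:ℝ) Real.pi, (C θ)ᵀ = C θ)
    (n : ℕ) (i j : Fin m) : Hmat α β C n i j = Hmat α β C n j i := by
  simp only [Hmat, Matrix.of_apply]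
  apply intervalIntegral.integral_congr
  intro θ hθ
  rw [Set.uIcc_of_le Real.pi_pos.le] at hθ
  have h := congrFun (congrFun (hsym θ hθ) i) j
  rw [Matrix.transpose_apply] at h
  simp only [← h]

lemma quad_expand {m : ℕ} (A : Matrix (Fin m) (Fin m) ℝ) (i j : Fin m) (c : ℝ) :
    (Pi.single i 1 + Pi.single j c) ⬝ᵥ A.mulVec (Pi.single i 1 + Pi.single j c)
      = A i i + c * A i j + c * A j i + c * c * A j j := by
  rw [Matrix.mulVec_add, dotProduct_add, add_dotProduct, add_dotProduct]
  simp [Matrix.mulVec_single, single_dotProduct]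
  ring

lemma psd_diag {m : ℕ} {A : Matrix (Fin m) (Fin m) ℝ} (h : PSD A) (i : Fin m) : 0 ≤ A i i := by
  have h0 := h (Pi.single i 1 + Pi.single i 0)
  rw [quad_expand] at h0
  simpa using h0

lemma psd_abs_entry {m : ℕ} {A : Matrix (Fin m) (Fin m) ℝ} (h : PSD A) (i j : Fin m)
    (hji : A i j = A j i) : |A i j| ≤ (A i i + A j j) / 2 := by
  have h1 := h (Pi.single i 1 + Pi.single j 1)
  have h2 := h (Pi.single i 1 + Pi.single j (-1))
  rw [quad_expand] at h1 h2
  rw [abs_le]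
  constructor <;> [linarith; linarith]

lemma Hmat_abs_le {m : ℕ} (α β : ℝ) (hα : 0 ≤ α) (hβ : 0 ≤ β)
    (C : ℝ → Matrix (Fin m) (Fin m) ℝ)
    (hcont : ∀ i j, ContinuousOn (fun θ => C θ i j) (Set.Icc 0 Real.pi))
    (n : ℕ) (i j : Fin m) :
    |Hmat α (β+1) C n i j| ≤ |Hmat α β C n i j| + |Hmat α β C (n+1) i j| := by
  have hD : (0:ℝ) < 2*(n:ℝ)+α+β+2 := by
    have : (0:ℝ) ≤ (n:ℝ) := n.cast_nonneg
    linarith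
  have key := Hmat_rec_entry α β hα hβ C hcont n i j
  have hb1 : (0:ℝ) ≤ (n:ℝ)+β+1 := by have : (0:ℝ) ≤ (n:ℝ) := n.cast_nonneg; linarith
  have hb2 : (0:ℝ) ≤ (n:ℝ)+1 := by have : (0:ℝ) ≤ (n:ℝ) := n.cast_nonneg; linarith
  have hle1 : (n:ℝ)+β+1 ≤ 2*(n:ℝ)+α+β+2 := by have : (0:ℝ) ≤ (n:ℝ) := n.cast_nonneg; linarith
  have hle2 : (n:ℝ)+1 ≤ 2*(n:ℝ)+α+β+2 := by have : (0:ℝ) ≤ (n:ℝ) := n.cast_nonneg; linarith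
  rw [← mul_le_mul_iff_right₀ hD]
  calc (2*(n:ℝ)+α+β+2) * |Hmat α (β+1) C n i j|
      = |(2*(n:ℝ)+α+β+2) * Hmat α (β+1) C n i j| := by
        rw [abs_mul, abs_of_pos hD]
    _ = |((n:ℝ)+β+1) * Hmat α β C n i j + ((n:ℝ)+1) * Hmat α β C (n+1) i j| := by rw [key]
    _ ≤ ((n:ℝ)+β+1) * |Hmat α β C n i j| + ((n:ℝ)+1) * |Hmat α β C (n+1) i j| := by
        refine (abs_add_le _ _).trans ?_
        rw [abs_mul, abs_mul, abs_of_nonneg hb1, abs_of_nonneg hb2]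
    _ ≤ (2*(n:ℝ)+α+β+2) * (|Hmat α β C n i j| + |Hmat α β C (n+1) i j|) := by
        have a1 : (0:ℝ) ≤ |Hmat α β C n i j| := abs_nonneg _
        have a2 : (0:ℝ) ≤ |Hmat α β C (n+1) i j| := abs_nonneg _
        nlinarith

lemma Hmat_psd_step {m : ℕ} (α β : ℝ) (hα : 0 ≤ α) (hβ : 0 ≤ β)
    (C : ℝ → Matrix (Fin m) (Fin m) ℝ)
    (hcont : ∀ i j, ContinuousOn (fun θ => C θ i j) (Set.Icc 0 Real.pi))
    (n : ℕ) (h1 : PSD (Hmat α β C n)) (h2 : PSD (Hmat α β C (n+1))) :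
    PSD (Hmat α (β+1) C n) := by
  intro v
  have hD : (0:ℝ) < 2*(n:ℝ)+α+β+2 := by
    have : (0:ℝ) ≤ (n:ℝ) := n.cast_nonneg
    linarith
  have hb1 : (0:ℝ) ≤ (n:ℝ)+β+1 := by have : (0:ℝ) ≤ (n:ℝ) := n.cast_nonneg; linarith
  have hb2 : (0:ℝ) ≤ (n:ℝ)+1 := by have : (0:ℝ) ≤ (n:ℝ) := n.cast_nonneg; linarith
  have key : (2*(n:ℝ)+α+β+2) • Hmat α (β+1) C n
      = ((n:ℝ)+β+1) • Hmat α β C n + ((n:ℝ)+1) • Hmat α β C (n+1) := by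
    ext i j
    simp only [Matrix.smul_apply, Matrix.add_apply, smul_eq_mul]
    exact Hmat_rec_entry α β hα hβ C hcont n i j
  have hq := congrArg (fun A : Matrix (Fin m) (Fin m) ℝ => v ⬝ᵥ A.mulVec v) key
  simp only [Matrix.smul_mulVec, Matrix.add_mulVec, dotProduct_add,
    dotProduct_smul, smul_eq_mul] at hq
  have hpos : 0 ≤ (2*(n:ℝ)+α+β+2) * (v ⬝ᵥ (Hmat α (β+1) C n).mulVec v) := by
    rw [hq]
    have := h1 v
    have := h2 v
    positivity
  exact nonneg_of_mul_nonneg_right hpos hD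

/-- Bundled induction invariant. -/
def Good {m : ℕ} (α : ℝ) (C : ℝ → Matrix (Fin m) (Fin m) ℝ) (β : ℝ) : Prop :=
  (∀ n, PSD (Hmat α β C n)) ∧
    (∀ i j, Summable fun n : ℕ =>
      ((n : ℝ) + 1) ^ (α + 1) * |Hmat α β C (n + 1) i j|)

lemma good_step {m : ℕ} (α : ℝ) (hα : 0 ≤ α) (C : ℝ → Matrix (Fin m) (Fin m) ℝ)
    (hcont : ∀ i j, ContinuousOn (fun θ => C θ i j) (Set.Icc 0 Real.pi))
    (β : ℝ) (hβ : 0 ≤ β) (hg : Good α C β) : Good α C (β+1) := by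
  obtain ⟨hpsd, hsum⟩ := hg
  constructor
  · intro n
    exact Hmat_psd_step α β hα hβ C hcont n (hpsd n) (hpsd (n+1))
  · intro i j
    have hs1 := hsum i j
    have hs2 : Summable fun n : ℕ => ((n:ℝ) + 2) ^ (α + 1) * |Hmat α β C (n + 2) i j| := by
      have := (summable_nat_add_iff 1).mpr hs1
      refine this.congr fun n => ?_
      push_cast
      ring_nf
    refine Summable.of_nonneg_of_le (fun n => ?_) (fun n => ?_) (hs1.add hs2)
    · positivity
    · have habs := Hmat_abs_le α β hα hβ C hcont (n+1) i j
      have hw1 : (0:ℝ) ≤ ((n:ℝ)+1) ^ (α+1) := Real.rpow_nonneg (by positivity) _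
      have hw2 : ((n:ℝ)+1) ^ (α+1) ≤ ((n:ℝ)+2) ^ (α+1) :=
        Real.rpow_le_rpow (by positivity) (by linarith) (by linarith)
      calc ((n:ℝ)+1) ^ (α+1) * |Hmat α (β+1) C (n+1) i j|
          ≤ ((n:ℝ)+1) ^ (α+1) * (|Hmat α β C (n+1) i j| + |Hmat α β C (n+2) i j|) := by
            exact mul_le_mul_of_nonneg_left habs hw1
        _ ≤ ((n:ℝ)+1) ^ (α+1) * |Hmat α β C (n+1) i j|
              + ((n:ℝ)+2) ^ (α+1) * |Hmat α β C (n+2) i j| := by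
            have := abs_nonneg (Hmat α β C (n+2) i j)
            nlinarith

lemma good_iterate {m : ℕ} (α : ℝ) (hα : 0 ≤ α) (C : ℝ → Matrix (Fin m) (Fin m) ℝ)
    (hcont : ∀ i j, ContinuousOn (fun θ => C θ i j) (Set.Icc 0 Real.pi))
    (h0 : Good α C 0) : ∀ b : ℕ, Good α C (b : ℝ) := by
  intro b
  induction b with
  | zero => simpa using h0
  | succ b ih =>
      have h2 := good_step α hα C hcont (b:ℝ) b.cast_nonneg ih
      have hc : ((b:ℝ)+1) = ((b+1:ℕ):ℝ) := by push_cast; ring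
      rwa [hc] at h2

lemma seriesConv_of_summable (f : ℕ → ℝ) (h : Summable f) : SeriesConv f :=
  ⟨∑' n, f n, h.hasSum.tendsto_sum_nat⟩

lemma summable_of_seriesConv_nonneg (f : ℕ → ℝ) (hf : ∀ n, 0 ≤ f n)
    (h : SeriesConv f) : Summable f := by
  obtain ⟨L, hL⟩ := h
  refine summable_of_sum_range_le (c := L) hf fun n => ?_
  have hmono : Monotone fun N => ∑ k ∈ Finset.range N, f k := by
    intro a b hab
    exact Finset.sum_le_sum_of_subset_of_nonneg (Finset.range_subset_range.2 hab)
      fun k _ _ => hf k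
  exact hmono.ge_of_tendsto hL n

lemma good_init {m : ℕ} (α : ℝ) (hα : 0 ≤ α) (C : ℝ → Matrix (Fin m) (Fin m) ℝ)
    (hsym : ∀ θ ∈ Set.Icc (0:ℝ) Real.pi, (C θ)ᵀ = C θ)
    (hpsd : ∀ n, PSD (Hmat α 0 C n))
    (hconv : ∀ i j, SeriesConv fun n =>
      ((n : ℝ) + 1) ^ (α + 1) * Hmat α 0 C (n + 1) i j) :
    Good α C 0 := by
  refine ⟨hpsd, fun i j => ?_⟩
  have hdiag : ∀ i : Fin m, Summable fun n : ℕ =>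
      ((n:ℝ)+1) ^ (α+1) * Hmat α 0 C (n+1) i i := by
    intro i
    refine summable_of_seriesConv_nonneg _ (fun n => ?_) (hconv i i)
    have h1 : (0:ℝ) ≤ ((n:ℝ)+1) ^ (α+1) := Real.rpow_nonneg (by positivity) _
    exact mul_nonneg h1 (psd_diag (hpsd (n+1)) i)
  have hsumij := ((hdiag i).add (hdiag j)).mul_left (1/2 : ℝ)
  refine Summable.of_nonneg_of_le (fun n => ?_) (fun n => ?_) hsumij
  · positivity
  · have hw : (0:ℝ) ≤ ((n:ℝ)+1) ^ (α+1) := Real.rpow_nonneg (by positivity) _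
    have habs := psd_abs_entry (hpsd (n+1)) i j (Hmat_symm_entry α 0 C hsym (n+1) i j)
    calc ((n:ℝ)+1) ^ (α+1) * |Hmat α 0 C (n+1) i j|
        ≤ ((n:ℝ)+1) ^ (α+1) * ((Hmat α 0 C (n+1) i i + Hmat α 0 C (n+1) j j)/2) :=
          mul_le_mul_of_nonneg_left habs hw
      _ = 1/2 * (((n:ℝ)+1) ^ (α+1) * Hmat α 0 C (n+1) i i
            + ((n:ℝ)+1) ^ (α+1) * Hmat α 0 C (n+1) j j) := by ring

lemma good_conclusion {m : ℕ} (α : ℝ) (C : ℝ → Matrix (Fin m) (Fin m) ℝ) (β : ℝ)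
    (hg : Good α C β) :
    (∀ n, PSD (Hmat α β C n)) ∧
      (∀ i j, SeriesConv fun n =>
        ((n : ℝ) + 1) ^ (α + 1) * Hmat α β C (n + 1) i j) := by
  refine ⟨hg.1, fun i j => ?_⟩
  apply seriesConv_of_summable
  apply Summable.of_abs
  refine (hg.2 i j).congr fun n => ?_
  rw [abs_mul, abs_of_nonneg (Real.rpow_nonneg (by positivity) _)]

/-- Theorem 2(ii): a covariance structure on the complex projective space P^d(ℂ)
transfers to the sphere S^d and (for d ∈ {8,12,...}) to the quaternionic
projective space P^d(ℍ), stated via the Theorem-1 characterization. -/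
theorem stmt8 (m : ℕ) (hm : 1 ≤ m) (d : ℕ) (hd : 4 ≤ d) (hde : Even d)
    (C : ℝ → Matrix (Fin m) (Fin m) ℝ)
    (hsym : ∀ θ ∈ Set.Icc (0:ℝ) Real.pi, (C θ)ᵀ = C θ)
    (hcont : ∀ i j, ContinuousOn (fun θ => C θ i j) (Set.Icc 0 Real.pi))
    (hyp : (∀ n, PSD (Hmat (((d : ℝ) - 2) / 2) 0 C n)) ∧
      (∀ i j, SeriesConv fun n =>
        ((n : ℝ) + 1) ^ ((((d : ℝ) - 2) / 2) + 1) *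
          Hmat (((d : ℝ) - 2) / 2) 0 C (n + 1) i j)) :
    ((∀ n, PSD (Hmat (((d : ℝ) - 2) / 2) (((d : ℝ) - 2) / 2) C n)) ∧
      (∀ i j, SeriesConv fun n =>
        ((n : ℝ) + 1) ^ ((((d : ℝ) - 2) / 2) + 1) *
          Hmat (((d : ℝ) - 2) / 2) (((d : ℝ) - 2) / 2) C (n + 1) i j))
    ∧
    ((8 ≤ d ∧ (∃ k : ℕ, d = 4 * k)) →
      ((∀ n, PSD (Hmat (((d : ℝ) - 2) / 2) 1 C n)) ∧
        (∀ i j, SeriesConv fun n =>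
          ((n : ℝ) + 1) ^ ((((d : ℝ) - 2) / 2) + 1) *
            Hmat (((d : ℝ) - 2) / 2) 1 C (n + 1) i j))) := by
  set α : ℝ := ((d : ℝ) - 2) / 2 with hαdef
  have hd4 : (4:ℝ) ≤ (d:ℝ) := by exact_mod_cast hd
  have hα : (0:ℝ) ≤ α := by rw [hαdef]; linarith
  have h0 : Good α C 0 := good_init α hα C hsym hyp.1 hyp.2
  constructor
  · -- transfer to β = α
    obtain ⟨e, he⟩ := hde
    have he2 : 2 ≤ e := by omega
    have hcast : ((e - 1 : ℕ) : ℝ) = α := by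
      rw [hαdef]
      have : ((d:ℕ):ℝ) = (e:ℝ) + (e:ℝ) := by rw [he]; push_cast; ring
      rw [this, Nat.cast_sub (by omega : 1 ≤ e)]
      push_cast
      ring
    have hg : Good α C α := by
      have := good_iterate α hα C hcont h0 (e - 1)
      rwa [hcast] at this
    exact good_conclusion α C α hg
  · intro _
    have hg : Good α C 1 := by
      have := good_step α hα C hcont 0 le_rfl h0
      rwa [zero_add] at this
    exact good_conclusion α C 1 hg
end

section
/- Let α, β > −1 be real numbers with α + β > −1. Then for every n ∈ ℕ₀ and every x ∈ ℝ, ((1+x)/2)^n = Σ_{k=0}^{n} φ_k^{(α,β)}(n) P_k^{(α,β)}(x), where φ_k^{(α,β)}(n) = Γ(n+β+1) n! (2k+α+β+1) Γ(k+α+β+1) / ( Γ(k+n+α+β+2) Γ(k+β+1) (n−k)! ), and every coefficient φ_k^{(α,β)}(n) is positive. -/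
open Filter

/-- The coefficient φ_k^{(α,β)}(n) of Askey'"'"'s expansion. -/
noncomputable def phiCoef (α β : ℝ) (n k : ℕ) : ℝ :=
  Real.Gamma ((n : ℝ) + β + 1) * (n.factorial : ℝ) * (2 * (k : ℝ) + α + β + 1) *
      Real.Gamma ((k : ℝ) + α + β + 1) /
    (Real.Gamma ((k : ℝ) + (n : ℝ) + α + β + 2) * Real.Gamma ((k : ℝ) + β + 1) *
      ((n - k).factorial : ℝ))

set_option maxHeartbeats 1000000

noncomputable section AskeyAux

def poch (x : ℝ) (m : ℕ) : ℝ := ∏ i ∈ Finset.range m, (x + i)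

lemma poch_zero (x : ℝ) : poch x 0 = 1 := by simp [poch]

lemma poch_succ (x : ℝ) (m : ℕ) : poch x (m + 1) = poch x m * (x + m) := by
  simp [poch, Finset.prod_range_succ]

lemma poch_pos {x : ℝ} (hx : 0 < x) (m : ℕ) : 0 < poch x m := by
  refine Finset.prod_pos fun i _ => ?_
  positivity

lemma poch_add (x : ℝ) (m l : ℕ) : poch x (m + l) = poch x m * poch (x + m) l := by
  induction l with
  | zero => simp [poch_zero]
  | succ l ih =>
      have : m + (l + 1) = (m + l) + 1 := by ring
      rw [this, poch_succ, ih, poch_succ]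
      push_cast
      ring

def Tt (α β : ℝ) (j n k : ℕ) : ℝ :=
  (poch (β + 1) n * (n.factorial : ℝ) * (2 * k + α + β + 1) *
      poch (α + β + 1) (k + j) * poch (α + 1) k) /
    (poch (α + 1) j * (j.factorial : ℝ) * poch (α + β + 1) (k + n + 1) *
      poch (β + 1) k * ((n - k).factorial : ℝ) * ((k - j).factorial : ℝ))

def Hh (α β : ℝ) (j n k : ℕ) : ℝ :=
  (-((k : ℝ) - j) * ((k : ℝ) + β) * poch (β + 1) n * (n.factorial : ℝ) *
      poch (α + β + 1) (k + j) * poch (α + 1) k) /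
    (poch (α + 1) j * (j.factorial : ℝ) * poch (α + β + 1) (k + n + 1) *
      poch (β + 1) k * ((n + 1 - k).factorial : ℝ) * ((k - j).factorial : ℝ))

lemma scalar_id (a b nn kk jj : ℝ) (h1 : nn + 1 ≠ 0)
    (h2 : a + b + 1 + (kk + nn + 1) ≠ 0) (h3 : nn - kk + 1 ≠ 0)
    (h4 : b + 1 + kk ≠ 0) (h5 : kk - jj + 1 ≠ 0) :
    (nn + 1 - jj) / (nn + 1) *
        ((b + 1 + nn) * (nn + 1) * (2 * kk + a + b + 1) /
          ((a + b + 1 + (kk + nn + 1)) * (nn - kk + 1)))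
      = (2 * kk + a + b + 1)
        + ((-(kk + 1 - jj)) * (kk + 1 + b) * (a + b + 1 + (kk + jj)) * (a + 1 + kk) /
              ((a + b + 1 + (kk + nn + 1)) * (b + 1 + kk) * (kk - jj + 1))
            - (-(kk - jj)) * (kk + b) / (nn - kk + 1)) := by
  field_simp
  ring

variable {α β : ℝ}

lemma local_id (hα : -1 < α) (hβ : -1 < β) (hab : -1 < α + β)
    {j n k : ℕ} (hj : j ≤ k) (hk : k ≤ n) :
    ((n : ℝ) + 1 - j) / ((n : ℝ) + 1) * Tt α β j (n + 1) k
      = Tt α β j n k + (Hh α β j n (k + 1) - Hh α β j n k) := by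
  have ha1 : (0:ℝ) < α + 1 := by linarith
  have hb1 : (0:ℝ) < β + 1 := by linarith
  have hs1 : (0:ℝ) < α + β + 1 := by linarith
  have hkn : (k : ℝ) ≤ (n : ℝ) := Nat.cast_le.mpr hk
  have hjk : (j : ℝ) ≤ (k : ℝ) := Nat.cast_le.mpr hj
  have hc1 : ((n - k : ℕ) : ℝ) = (n : ℝ) - k := Nat.cast_sub hk
  have hc2 : ((k - j : ℕ) : ℝ) = (k : ℝ) - j := Nat.cast_sub hj
  have h1 : (n : ℝ) + 1 ≠ 0 := by positivity
  have h2 : α + β + 1 + ((k:ℝ) + (n:ℝ) + 1) ≠ 0 := by positivity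
  have h3 : (n:ℝ) - (k:ℝ) + 1 ≠ 0 := by nlinarith
  have h4 : β + 1 + (k:ℝ) ≠ 0 := by positivity
  have h5 : (k:ℝ) - (j:ℝ) + 1 ≠ 0 := by nlinarith
  have hpa : poch (α+1) k ≠ 0 := (poch_pos ha1 k).ne'
  have hpaj : poch (α+1) j ≠ 0 := (poch_pos ha1 j).ne'
  have hpb : poch (β+1) k ≠ 0 := (poch_pos hb1 k).ne'
  have hpbn : poch (β+1) n ≠ 0 := (poch_pos hb1 n).ne'
  have hps : poch (α+β+1) (k+j) ≠ 0 := (poch_pos hs1 _).ne'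
  have hpsn : poch (α+β+1) (k+n+1) ≠ 0 := (poch_pos hs1 _).ne'
  have hfnk : ((n-k).factorial : ℝ) ≠ 0 := Nat.cast_ne_zero.mpr (n-k).factorial_pos.ne'
  have hfkj : ((k-j).factorial : ℝ) ≠ 0 := Nat.cast_ne_zero.mpr (k-j).factorial_pos.ne'
  have hfn : ((n).factorial : ℝ) ≠ 0 := Nat.cast_ne_zero.mpr (n).factorial_pos.ne'
  have hfj : ((j).factorial : ℝ) ≠ 0 := Nat.cast_ne_zero.mpr (j).factorial_pos.ne'
  set u : ℝ := (poch (β+1) n * (n.factorial : ℝ) * poch (α+β+1) (k+j) * poch (α+1) k) /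
      (poch (α+1) j * (j.factorial : ℝ) * poch (α+β+1) (k+n+1) * poch (β+1) k *
        ((n-k).factorial : ℝ) * ((k-j).factorial : ℝ)) with hu
  have eqA : ((n : ℝ) + 1 - j) / ((n : ℝ) + 1) * Tt α β j (n + 1) k
      = (((n:ℝ)+1-(j:ℝ)) / ((n:ℝ)+1) *
          ((β+1+(n:ℝ)) * ((n:ℝ)+1) * (2*(k:ℝ)+α+β+1) /
            ((α+β+1+((k:ℝ)+(n:ℝ)+1)) * ((n:ℝ)-(k:ℝ)+1)))) * u := by
    unfold Tt
    have e1 : k + (n + 1) + 1 = (k + n + 1) + 1 := by ring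
    have e2 : n + 1 - k = (n - k) + 1 := by omega
    rw [e1, e2, poch_succ (β+1) n, poch_succ (α+β+1) (k+n+1),
      Nat.factorial_succ (n-k), Nat.factorial_succ n, hu]
    push_cast [hc1]
    field_simp
  have eqB : Tt α β j n k = (2*(k:ℝ)+α+β+1) * u := by
    unfold Tt; rw [hu]; ring
  have eqC : Hh α β j n (k + 1)
      = ((-((k:ℝ)+1-(j:ℝ))) * ((k:ℝ)+1+β) * (α+β+1+((k:ℝ)+(j:ℝ))) * (α+1+(k:ℝ)) /
          ((α+β+1+((k:ℝ)+(n:ℝ)+1)) * (β+1+(k:ℝ)) * ((k:ℝ)-(j:ℝ)+1))) * u := by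
    unfold Hh
    have e3 : (k + 1) + j = (k + j) + 1 := by ring
    have e4 : n + 1 - (k + 1) = n - k := by omega
    have e5 : (k + 1) - j = (k - j) + 1 := by omega
    have e6 : (k + 1) + n + 1 = (k + n + 1) + 1 := by ring
    rw [e3, e4, e5, e6, poch_succ (α+β+1) (k+j), poch_succ (α+1) k,
      poch_succ (β+1) k, poch_succ (α+β+1) (k+n+1), Nat.factorial_succ (k-j), hu]
    push_cast [hc2]
    field_simp
  have eqD : Hh α β j n k
      = ((-((k:ℝ)-(j:ℝ))) * ((k:ℝ)+β) / ((n:ℝ)-(k:ℝ)+1)) * u := by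
    unfold Hh
    have e2 : n + 1 - k = (n - k) + 1 := by omega
    rw [e2, Nat.factorial_succ (n-k), hu]
    push_cast [hc1]
    field_simp
  rw [eqA, eqB, eqC, eqD]
  have sid : (((n:ℝ)+1-(j:ℝ)) / ((n:ℝ)+1) *
          ((β+1+(n:ℝ)) * ((n:ℝ)+1) * (2*(k:ℝ)+α+β+1) /
            ((α+β+1+((k:ℝ)+(n:ℝ)+1)) * ((n:ℝ)-(k:ℝ)+1))))
      = (2*(k:ℝ)+α+β+1)
        + (((-((k:ℝ)+1-(j:ℝ))) * ((k:ℝ)+1+β) * (α+β+1+((k:ℝ)+(j:ℝ))) * (α+1+(k:ℝ)) /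
              ((α+β+1+((k:ℝ)+(n:ℝ)+1)) * (β+1+(k:ℝ)) * ((k:ℝ)-(j:ℝ)+1)))
            - ((-((k:ℝ)-(j:ℝ))) * ((k:ℝ)+β) / ((n:ℝ)-(k:ℝ)+1))) := by
    field_simp
    ring
  rw [sid]
  ring

lemma boundary_id (hα : -1 < α) (hβ : -1 < β) (hab : -1 < α + β)
    {j n : ℕ} (hj : j ≤ n) :
    ((n : ℝ) + 1 - j) / ((n : ℝ) + 1) * Tt α β j (n + 1) (n + 1)
      = - Hh α β j n (n + 1) := by
  have ha1 : (0:ℝ) < α + 1 := by linarith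
  have hb1 : (0:ℝ) < β + 1 := by linarith
  have hs1 : (0:ℝ) < α + β + 1 := by linarith
  unfold Tt Hh
  have e1 : (n + 1) + (n + 1) + 1 = ((n + 1) + n + 1) + 1 := by ring
  have e2 : (n + 1) - (n + 1) = 0 := by omega
  rw [e1, e2, poch_succ (α+β+1) ((n+1)+n+1), poch_succ (β+1) n,
    Nat.factorial_succ n, Nat.factorial_zero]
  have h1 : (n : ℝ) + 1 ≠ 0 := by positivity
  have h2 : α + β + 1 + (((n:ℕ)+1+n+1 : ℕ) : ℝ) ≠ 0 := by positivity
  have hpa : poch (α+1) (n+1) ≠ 0 := (poch_pos ha1 _).ne'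
  have hpaj : poch (α+1) j ≠ 0 := (poch_pos ha1 j).ne'
  have hpbn : poch (β+1) n ≠ 0 := (poch_pos hb1 n).ne'
  have hb2 : β + 1 + (n:ℝ) ≠ 0 := by positivity
  have hps : poch (α+β+1) ((n+1)+j) ≠ 0 := (poch_pos hs1 _).ne'
  have hpsn : poch (α+β+1) ((n+1)+n+1) ≠ 0 := (poch_pos hs1 _).ne'
  have hfn : ((n).factorial : ℝ) ≠ 0 := Nat.cast_ne_zero.mpr (n).factorial_pos.ne'
  have hfj : ((j).factorial : ℝ) ≠ 0 := Nat.cast_ne_zero.mpr (j).factorial_pos.ne'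
  have hfnj : (((n+1)-j).factorial : ℝ) ≠ 0 :=
    Nat.cast_ne_zero.mpr ((n+1)-j).factorial_pos.ne'
  push_cast
  field_simp
  ring

lemma Tt_diag (hα : -1 < α) (hβ : -1 < β) (hab : -1 < α + β) (j : ℕ) :
    Tt α β j j j = 1 := by
  have ha1 : (0:ℝ) < α + 1 := by linarith
  have hb1 : (0:ℝ) < β + 1 := by linarith
  have hs1 : (0:ℝ) < α + β + 1 := by linarith
  unfold Tt
  have e1 : j + j + 1 = (j + j) + 1 := rfl
  rw [e1, poch_succ (α+β+1) (j+j)]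
  have e2 : j - j = 0 := by omega
  rw [e2, Nat.factorial_zero]
  have hpa : poch (α+1) j ≠ 0 := (poch_pos ha1 j).ne'
  have hpb : poch (β+1) j ≠ 0 := (poch_pos hb1 j).ne'
  have hps : poch (α+β+1) (j+j) ≠ 0 := (poch_pos hs1 _).ne'
  have hfj : ((j).factorial : ℝ) ≠ 0 := Nat.cast_ne_zero.mpr (j).factorial_pos.ne'
  have h2 : α + β + 1 + ((j+j : ℕ) : ℝ) ≠ 0 := by positivity
  push_cast
  field_simp
  ring

lemma telescope (f : ℕ → ℝ) {j n : ℕ} (hj : j ≤ n) :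
    ∑ k ∈ Finset.Icc j n, (f (k + 1) - f k) = f (n + 1) - f j := by
  induction n, hj using Nat.le_induction with
  | base => simp
  | succ n hj ih =>
      rw [Finset.sum_Icc_succ_top (by omega : j ≤ n + 1), ih]
      ring

lemma Hh_left (j n : ℕ) : Hh α β j n j = 0 := by
  unfold Hh
  simp

lemma keySum (hα : -1 < α) (hβ : -1 < β) (hab : -1 < α + β)
    {j n : ℕ} (hj : j ≤ n) :
    ∑ k ∈ Finset.Icc j n, Tt α β j n k = (n.choose j : ℝ) := by
  induction n, hj using Nat.le_induction with
  | base => simp [Tt_diag hα hβ hab]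
  | succ n hj ih =>
      have key : ((n : ℝ) + 1 - j) / ((n : ℝ) + 1) *
          (∑ k ∈ Finset.Icc j (n+1), Tt α β j (n+1) k)
          = (n.choose j : ℝ) := by
        rw [Finset.sum_Icc_succ_top (by omega : j ≤ n + 1), mul_add,
          Finset.mul_sum, boundary_id hα hβ hab hj]
        have hterm : ∀ k ∈ Finset.Icc j n,
            ((n : ℝ) + 1 - j) / ((n : ℝ) + 1) * Tt α β j (n + 1) k
              = Tt α β j n k + (Hh α β j n (k + 1) - Hh α β j n k) := fun k hk => by
          rw [Finset.mem_Icc] at hk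
          exact local_id hα hβ hab hk.1 hk.2
        rw [Finset.sum_congr rfl hterm, Finset.sum_add_distrib, ih,
          telescope (Hh α β j n) hj, Hh_left]
        ring
      have hne : ((n : ℝ) + 1 - j) / ((n : ℝ) + 1) ≠ 0 := by
        have hjn : (j : ℝ) ≤ (n : ℝ) := Nat.cast_le.mpr hj
        have h0 : (0:ℝ) < (n : ℝ) + 1 - j := by linarith
        have : (0:ℝ) < ((n : ℝ) + 1 - j) / ((n : ℝ) + 1) := by positivity
        exact this.ne'
      have hchoose : ((n.choose j : ℕ) : ℝ) * ((n:ℝ) + 1)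
          = (((n+1).choose j : ℕ) : ℝ) * ((n:ℝ) + 1 - j) := by
        have := Nat.choose_mul_succ_eq n j
        have hcast := congrArg (fun m : ℕ => (m : ℝ)) this
        push_cast at hcast
        rw [Nat.cast_sub (by omega : j ≤ n + 1)] at hcast
        push_cast at hcast
        linarith [hcast]
      have hn1 : ((n:ℝ) + 1) ≠ 0 := by positivity
      have hnj : ((n:ℝ) + 1 - j) ≠ 0 := by
        have hjn : (j : ℝ) ≤ (n : ℝ) := Nat.cast_le.mpr hj
        nlinarith
      field_simp at key
      -- key : (↑n + 1 - ↑j) * ∑ ... = ↑(n.choose j) * (↑n + 1)  (roughly)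
      rw [mul_comm ((n:ℝ) + 1), hchoose] at key
      exact mul_left_cancel₀ hnj (by linarith [key])

lemma Gamma_shift {x : ℝ} (hx : 0 < x) (m : ℕ) :
    Real.Gamma (x + m) = poch x m * Real.Gamma x := by
  induction m with
  | zero => simp [poch_zero]
  | succ m ih =>
      have h1 : x + (m + 1 : ℕ) = (x + m) + 1 := by push_cast; ring
      have h2 : x + (m : ℝ) ≠ 0 := by positivity
      rw [h1, Real.Gamma_add_one h2, ih, poch_succ]
      ring

lemma prodA (hα : -1 < α) {j k : ℕ} (hj : j ≤ k) :
    poch (α + 1) j * ∏ i ∈ Finset.Icc (j + 1) k, (α + (i : ℝ)) = poch (α + 1) k := by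
  induction k, hj using Nat.le_induction with
  | base =>
      rw [Finset.Icc_eq_empty (by omega), Finset.prod_empty, mul_one]
  | succ k hk ih =>
      rw [Finset.prod_Icc_succ_top (by omega : j + 1 ≤ k + 1), ← mul_assoc, ih,
        poch_succ]
      push_cast
      ring

lemma prodS (c : ℝ) (j : ℕ) :
    ∏ m ∈ Finset.Icc 1 j, (c + (m : ℝ)) = poch (c + 1) j := by
  induction j with
  | zero => rw [Finset.Icc_eq_empty (by omega), Finset.prod_empty, poch_zero]
  | succ j ih =>
      rw [Finset.prod_Icc_succ_top (by omega : 1 ≤ j + 1), ih, poch_succ]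
      push_cast
      ring

lemma phiT (hα : -1 < α) (hβ : -1 < β) (hab : -1 < α + β)
    {j k n : ℕ} (hj : j ≤ k) (hk : k ≤ n) :
    phiCoef α β n k * ((1 / (k.factorial : ℝ)) * ((k.choose j : ℝ) *
        (∏ i ∈ Finset.Icc (j + 1) k, (α + (i : ℝ))) *
        (∏ m ∈ Finset.Icc 1 j, (α + β + (k : ℝ) + (m : ℝ))))) = Tt α β j n k := by
  have ha1 : (0:ℝ) < α + 1 := by linarith
  have hb1 : (0:ℝ) < β + 1 := by linarith
  have hs1 : (0:ℝ) < α + β + 1 := by linarith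
  have g1 : Real.Gamma ((n:ℝ) + β + 1) = poch (β+1) n * Real.Gamma (β+1) := by
    rw [show (n:ℝ) + β + 1 = (β+1) + (n:ℕ) by push_cast; ring, Gamma_shift hb1]
  have g2 : Real.Gamma ((k:ℝ) + α + β + 1) = poch (α+β+1) k * Real.Gamma (α+β+1) := by
    rw [show (k:ℝ) + α + β + 1 = (α+β+1) + (k:ℕ) by push_cast; ring, Gamma_shift hs1]
  have g3 : Real.Gamma ((k:ℝ) + (n:ℝ) + α + β + 2)
      = poch (α+β+1) (k+n+1) * Real.Gamma (α+β+1) := by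
    rw [show (k:ℝ) + (n:ℝ) + α + β + 2 = (α+β+1) + ((k+n+1:ℕ):ℝ) by push_cast; ring,
      Gamma_shift hs1]
  have g4 : Real.Gamma ((k:ℝ) + β + 1) = poch (β+1) k * Real.Gamma (β+1) := by
    rw [show (k:ℝ) + β + 1 = (β+1) + (k:ℕ) by push_cast; ring, Gamma_shift hb1]
  have hPA := prodA hα hj
  have hPS : ∏ m ∈ Finset.Icc 1 j, (α + β + (k : ℝ) + (m : ℝ))
      = poch (α + β + (k:ℝ) + 1) j := prodS _ j
  have hsplit : poch (α+β+1) (k+j) = poch (α+β+1) k * poch (α + β + (k:ℝ) + 1) j := by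
    rw [poch_add, show α+β+1+(k:ℝ) = α+β+(k:ℝ)+1 by ring]
  have hchoose : (k.choose j : ℝ) * (j.factorial : ℝ) * ((k-j).factorial : ℝ)
      = (k.factorial : ℝ) := by
    exact_mod_cast congrArg (fun m : ℕ => (m : ℝ))
      (Nat.choose_mul_factorial_mul_factorial hj)
  unfold phiCoef Tt
  rw [g1, g2, g3, g4, hPS, hsplit]
  have hGb : Real.Gamma (β+1) ≠ 0 := (Real.Gamma_pos_of_pos hb1).ne'
  have hGs : Real.Gamma (α+β+1) ≠ 0 := (Real.Gamma_pos_of_pos hs1).ne'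
  have hpa : poch (α+1) k ≠ 0 := (poch_pos ha1 k).ne'
  have hpaj : poch (α+1) j ≠ 0 := (poch_pos ha1 j).ne'
  have hpb : poch (β+1) k ≠ 0 := (poch_pos hb1 k).ne'
  have hpbn : poch (β+1) n ≠ 0 := (poch_pos hb1 n).ne'
  have hpsk : poch (α+β+1) k ≠ 0 := (poch_pos hs1 _).ne'
  have hpsj : poch (α + β + (k:ℝ) + 1) j ≠ 0 := by
    have hk0 : (0:ℝ) ≤ (k:ℝ) := Nat.cast_nonneg k
    have : (0:ℝ) < α + β + (k:ℝ) + 1 := by linarith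
    exact (poch_pos this j).ne'
  have hpsn : poch (α+β+1) (k+n+1) ≠ 0 := (poch_pos hs1 _).ne'
  have hfnk : ((n-k).factorial : ℝ) ≠ 0 := Nat.cast_ne_zero.mpr (n-k).factorial_pos.ne'
  have hfkj : ((k-j).factorial : ℝ) ≠ 0 := Nat.cast_ne_zero.mpr (k-j).factorial_pos.ne'
  have hfk : ((k).factorial : ℝ) ≠ 0 := Nat.cast_ne_zero.mpr (k).factorial_pos.ne'
  have hfj : ((j).factorial : ℝ) ≠ 0 := Nat.cast_ne_zero.mpr (j).factorial_pos.ne'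
  -- replace the product over Icc (j+1) k using hPA
  have hPA' : ∏ i ∈ Finset.Icc (j + 1) k, (α + (i : ℝ))
      = poch (α+1) k / poch (α+1) j := by
    rw [eq_div_iff hpaj, mul_comm]
    exact hPA
  rw [hPA']
  have hck : (k.choose j : ℝ)
      = (k.factorial : ℝ) / ((j.factorial : ℝ) * ((k-j).factorial : ℝ)) := by
    rw [eq_div_iff (mul_ne_zero hfj hfkj), ← hchoose]
    ring
  rw [hck]
  field_simp

lemma swap_sum (n : ℕ) (f : ℕ → ℕ → ℝ) :
    ∑ k ∈ Finset.range (n + 1), ∑ j ∈ Finset.range (k + 1), f k j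
      = ∑ j ∈ Finset.range (n + 1), ∑ k ∈ Finset.Icc j n, f k j := by
  induction n with
  | zero => simp
  | succ n ih =>
      rw [Finset.sum_range_succ, ih, Finset.sum_range_succ
        (fun j => ∑ k ∈ Finset.Icc j (n+1), f k j)]
      have h1 : ∀ j ∈ Finset.range (n+1), ∑ k ∈ Finset.Icc j (n+1), f k j
          = (∑ k ∈ Finset.Icc j n, f k j) + f (n+1) j := fun j hj =>
        Finset.sum_Icc_succ_top (by have := Finset.mem_range.mp hj; omega) _
      rw [Finset.sum_congr rfl h1, Finset.sum_add_distrib, Finset.Icc_self,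
        Finset.sum_singleton, Finset.sum_range_succ (f (n+1))]
      ring

end AskeyAux


/-- Lemma 1(i) (Askey): expansion of ((1+x)/2)^n in Jacobi polynomials with
positive coefficients. -/
theorem stmt13 (α β : ℝ) (hα : -1 < α) (hβ : -1 < β) (hab : -1 < α + β)
    (n : ℕ) (x : ℝ) :
    (((1 + x) / 2) ^ n = ∑ k ∈ Finset.range (n + 1), phiCoef α β n k * jacobiP α β k x)
    ∧ ∀ k ∈ Finset.range (n + 1), 0 < phiCoef α β n k := by
  constructor
  · set y : ℝ := (x - 1) / 2 with hy
    have hterm : ∀ k, phiCoef α β n k * jacobiP α β k x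
        = ∑ j ∈ Finset.range (k + 1),
            (phiCoef α β n k * ((1 / (k.factorial : ℝ)) * ((k.choose j : ℝ) *
              (∏ i ∈ Finset.Icc (j + 1) k, (α + (i : ℝ))) *
              (∏ m ∈ Finset.Icc 1 j, (α + β + (k : ℝ) + (m : ℝ)))))) * y ^ j := by
      intro k
      rw [jacobiP, Finset.mul_sum, Finset.mul_sum]
      exact Finset.sum_congr rfl fun j _ => by ring
    rw [Finset.sum_congr rfl fun k _ => hterm k, swap_sum]
    have hinner : ∀ j ∈ Finset.range (n + 1),
        (∑ k ∈ Finset.Icc j n,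
          (phiCoef α β n k * ((1 / (k.factorial : ℝ)) * ((k.choose j : ℝ) *
            (∏ i ∈ Finset.Icc (j + 1) k, (α + (i : ℝ))) *
            (∏ m ∈ Finset.Icc 1 j, (α + β + (k : ℝ) + (m : ℝ)))))) * y ^ j)
          = (n.choose j : ℝ) * y ^ j := by
      intro j hj
      rw [← Finset.sum_mul]
      congr 1
      have h2 : ∀ k ∈ Finset.Icc j n,
          phiCoef α β n k * ((1 / (k.factorial : ℝ)) * ((k.choose j : ℝ) *
            (∏ i ∈ Finset.Icc (j + 1) k, (α + (i : ℝ))) *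
            (∏ m ∈ Finset.Icc 1 j, (α + β + (k : ℝ) + (m : ℝ)))))
            = Tt α β j n k := by
        intro k hk
        rw [Finset.mem_Icc] at hk
        exact phiT hα hβ hab hk.1 hk.2
      rw [Finset.sum_congr rfl h2]
      exact keySum hα hβ hab (by have := Finset.mem_range.mp hj; omega)
    rw [Finset.sum_congr rfl hinner]
    have hx : (1 + x) / 2 = y + 1 := by rw [hy]; ring
    rw [hx, add_pow]
    exact Finset.sum_congr rfl fun j _ => by ring
  · intro k hk
    rw [Finset.mem_range] at hk
    have hk0 : (0:ℝ) ≤ (k:ℝ) := Nat.cast_nonneg k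
    have hn0 : (0:ℝ) ≤ (n:ℝ) := Nat.cast_nonneg n
    unfold phiCoef
    apply div_pos
    · apply mul_pos
      apply mul_pos
      apply mul_pos
      · exact Real.Gamma_pos_of_pos (by linarith)
      · exact_mod_cast n.factorial_pos
      · linarith
      · exact Real.Gamma_pos_of_pos (by linarith)
    · apply mul_pos
      apply mul_pos
      · exact Real.Gamma_pos_of_pos (by linarith)
      · exact Real.Gamma_pos_of_pos (by linarith)
      · exact_mod_cast (n - k).factorial_pos
end

section
/- Fix a real number β > −1 and an integer n ≥ 1. Then for every θ ∈ [0,π], the limit as the real parameter α → ∞ of P_n^{(α,β)}(cos θ) / P_n^{(α,β)}(1) equals ((1 + cos θ)/2)^n. -/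
open Filter

lemma ratio_tendsto_one (a b : ℝ) :
    Tendsto (fun α : ℝ => (α + a) / (α + b)) atTop (nhds 1) := by
  have h1 : Tendsto (fun α : ℝ => α + b) atTop atTop :=
    tendsto_atTop_add_const_right _ _ tendsto_id
  have h2 : Tendsto (fun α : ℝ => (a - b) / (α + b)) atTop (nhds 0) :=
    Tendsto.div_atTop tendsto_const_nhds h1
  have h3 : Tendsto (fun α : ℝ => 1 + (a - b) / (α + b)) atTop (nhds 1) := by
    simpa using tendsto_const_nhds.add h2
  refine h3.congr' ?_
  filter_upwards [eventually_gt_atTop (-b)] with α hα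
  have hb : α + b ≠ 0 := by nlinarith
  field_simp
  ring

/-- Lemma 2(i): pointwise limit of the normalized Jacobi polynomial as α → ∞. -/
theorem stmt14 (β : ℝ) (hβ : -1 < β) (n : ℕ) (hn : 1 ≤ n) (θ : ℝ)
    (hθ : θ ∈ Set.Icc (0:ℝ) Real.pi) :
    Tendsto (fun α : ℝ => jacobiP α β n (Real.cos θ) / jacobiP α β n 1) atTop
      (nhds (((1 + Real.cos θ) / 2) ^ n)) := by
  set x := Real.cos θ with hx
  -- the simplified form
  set g : ℝ → ℝ := fun α => ∑ k ∈ Finset.range (n + 1),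
    (n.choose k : ℝ) * ((x - 1) / 2) ^ k *
      ∏ j ∈ Finset.Icc 1 k, (α + (β + (n : ℝ) + (j : ℝ))) / (α + (j : ℝ)) with hg
  have hlim : Tendsto g atTop (nhds (((1 + x) / 2) ^ n)) := by
    have hsum : (((1 + x) / 2) ^ n : ℝ) =
        ∑ k ∈ Finset.range (n + 1), (n.choose k : ℝ) * ((x - 1) / 2) ^ k * 1 := by
      have h := add_pow ((x - 1) / 2) (1 : ℝ) n
      simp only [one_pow, mul_one] at h
      have : (1 + x) / 2 = (x - 1) / 2 + 1 := by ring
      rw [this, h]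
      refine Finset.sum_congr rfl fun k hk => ?_
      ring
    rw [hsum]
    refine tendsto_finset_sum _ fun k hk => ?_
    have hp : Tendsto (fun α : ℝ => ∏ j ∈ Finset.Icc 1 k,
        (α + (β + (n : ℝ) + (j : ℝ))) / (α + (j : ℝ))) atTop
        (nhds (∏ _j ∈ Finset.Icc 1 k, (1 : ℝ))) :=
      tendsto_finset_prod _ fun j _ => ratio_tendsto_one _ _
    simpa using hp.const_mul ((n.choose k : ℝ) * ((x - 1) / 2) ^ k)
  refine hlim.congr' ?_
  filter_upwards [eventually_gt_atTop (0 : ℝ)] with α hα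
  -- denominator value
  have hfac : ((n.factorial : ℝ)) ≠ 0 := Nat.cast_ne_zero.mpr n.factorial_ne_zero
  have hD : jacobiP α β n 1 = (1 / (n.factorial : ℝ)) * ∏ i ∈ Finset.Icc 1 n, (α + (i : ℝ)) := by
    unfold jacobiP
    congr 1
    rw [Finset.sum_eq_single_of_mem 0 (Finset.mem_range.mpr (Nat.succ_pos n))]
    · simp
    · intro k hk hk0
      simp [zero_pow hk0]
  have hprodpos : ∀ k : ℕ, 0 < ∏ i ∈ Finset.Icc 1 k, (α + (i : ℝ)) := by
    intro k
    refine Finset.prod_pos fun i hi => ?_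
    have : (1 : ℕ) ≤ i := (Finset.mem_Icc.mp hi).1
    have : (1 : ℝ) ≤ (i : ℝ) := by exact_mod_cast this
    linarith
  have key : jacobiP α β n x / jacobiP α β n 1 = g α := by
    rw [hD]
    unfold jacobiP
    rw [mul_div_mul_left _ _ (one_div_ne_zero hfac), Finset.sum_div]
    refine Finset.sum_congr rfl fun k hk => ?_
    have hkn : k ≤ n := Nat.lt_succ_iff.mp (Finset.mem_range.mp hk)
    have hsplit : (∏ i ∈ Finset.Icc 1 k, (α + (i : ℝ))) * ∏ i ∈ Finset.Icc (k+1) n, (α + (i : ℝ))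
        = ∏ i ∈ Finset.Icc 1 n, (α + (i : ℝ)) := by
      have := Finset.prod_Ioc_consecutive (fun i : ℕ => (α + (i : ℝ))) (Nat.zero_le k) hkn
      have e1 : Finset.Icc 1 k = Finset.Ioc 0 k := by simpa using Finset.Icc_add_one_left_eq_Ioc 0 k
      have e2 : Finset.Icc 1 n = Finset.Ioc 0 n := by simpa using Finset.Icc_add_one_left_eq_Ioc 0 n
      simpa [Finset.Icc_add_one_left_eq_Ioc, e1, e2] using this
    rw [← hsplit]
    have hA := (hprodpos k).ne'
    have hB : (∏ i ∈ Finset.Icc (k+1) n, (α + (i : ℝ))) ≠ 0 := by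
      refine (Finset.prod_pos fun i hi => ?_).ne'
      have : (1 : ℕ) ≤ i := le_trans (Nat.le_add_left 1 k) (Finset.mem_Icc.mp hi).1
      have : (1 : ℝ) ≤ (i : ℝ) := by exact_mod_cast this
      linarith
    rw [Finset.prod_div_distrib]
    have hcongr : (∏ j ∈ Finset.Icc 1 k, (α + (β + (n : ℝ) + (j : ℝ))))
        = ∏ j ∈ Finset.Icc 1 k, (α + β + (n : ℝ) + (j : ℝ)) := by
      refine Finset.prod_congr rfl fun j hj => by ring
    rw [hcongr]
    field_simp
  exact key.symm
end

section
/- Let m ≥ 1 and suppose C(θ) = Σ_{n=0}^∞ B_n (1 + cos θ)^n for θ ∈ [0,π], where each B_n is an m×m positive semidefinite matrix and Σ_{n=0}^∞ 2^n B_n converges entrywise (i.e., C is an isotropic covariance matrix function on all compact two-point homogeneous spaces). Then: (i) C(θ) is a positive semidefinite matrix for each fixed θ ∈ [0,π]; (ii) C(θ₁) − C(θ₂) is positive semidefinite whenever 0 ≤ θ₁ ≤ θ₂ ≤ π; (iii) for every θ ∈ (0,π) at which C is (entrywise) differentiable, −C′(θ) is positive semidefinite. -/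
open Filter Matrix

lemma quadSeries {m : ℕ} {A : ℕ → Matrix (Fin m) (Fin m) ℝ}
    {L : Matrix (Fin m) (Fin m) ℝ} {x : ℝ}
    (h : ∀ i j, SeriesTo (fun n => A n i j * x ^ n) (L i j)) (v : Fin m → ℝ) :
    SeriesTo (fun n => (v ⬝ᵥ (A n).mulVec v) * x ^ n) (v ⬝ᵥ L.mulVec v) := by
  have hfun : ∀ N, ∑ n ∈ Finset.range N, (v ⬝ᵥ (A n).mulVec v) * x ^ n
      = ∑ i, v i * ∑ j, (∑ n ∈ Finset.range N, A n i j * x ^ n) * v j := by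
    intro N
    simp only [dotProduct, mulVec, Finset.sum_mul, Finset.mul_sum]
    rw [Finset.sum_comm]
    refine Finset.sum_congr rfl fun i _ => ?_
    rw [Finset.sum_comm]
    refine Finset.sum_congr rfl fun j _ => Finset.sum_congr rfl fun n _ => by ring
  have key : Tendsto (fun N => ∑ i, v i * ∑ j, (∑ n ∈ Finset.range N, A n i j * x ^ n) * v j)
      atTop (nhds (∑ i, v i * ∑ j, L i j * v j)) := by
    apply tendsto_finset_sum
    intro i _
    exact Tendsto.const_mul (v i)
      (tendsto_finset_sum _ fun j _ => Tendsto.mul_const (v j) (h i j))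
  have : v ⬝ᵥ L.mulVec v = ∑ i, v i * ∑ j, L i j * v j := by
    simp [dotProduct, mulVec]
  unfold SeriesTo
  rw [this]
  exact key.congr fun N => (hfun N).symm

/-- Corollary 5: properties of an isotropic covariance matrix function on all
compact two-point homogeneous spaces. -/
theorem stmt16 (m : ℕ) (hm : 1 ≤ m)
    (C : ℝ → Matrix (Fin m) (Fin m) ℝ) (B : ℕ → Matrix (Fin m) (Fin m) ℝ)
    (hPSD : ∀ n, PSD (B n))
    (hconv : ∀ i j, SeriesConv fun n => (2 : ℝ) ^ n * B n i j)
    (hrep : ∀ θ ∈ Set.Icc (0:ℝ) Real.pi, ∀ i j,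
      SeriesTo (fun n => B n i j * (1 + Real.cos θ) ^ n) (C θ i j)) :
    (∀ θ ∈ Set.Icc (0:ℝ) Real.pi, PSD (C θ)) ∧
    (∀ θ₁ θ₂ : ℝ, 0 ≤ θ₁ → θ₁ ≤ θ₂ → θ₂ ≤ Real.pi → PSD (C θ₁ - C θ₂)) ∧
    (∀ θ ∈ Set.Ioo (0:ℝ) Real.pi, ∀ D : Matrix (Fin m) (Fin m) ℝ,
      (∀ i j, HasDerivAt (fun t => C t i j) (D i j) θ) → PSD (-D)) := by
  -- quadratic form series for each θ in Icc
  have hq : ∀ θ ∈ Set.Icc (0:ℝ) Real.pi, ∀ v : Fin m → ℝ,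
      SeriesTo (fun n => (v ⬝ᵥ (B n).mulVec v) * (1 + Real.cos θ) ^ n)
        (v ⬝ᵥ (C θ).mulVec v) := fun θ hθ v => quadSeries (hrep θ hθ) v
  have hxnn : ∀ θ : ℝ, (0:ℝ) ≤ 1 + Real.cos θ := fun θ => by
    nlinarith [Real.neg_one_le_cos θ]
  have part1 : ∀ θ ∈ Set.Icc (0:ℝ) Real.pi, PSD (C θ) := by
    intro θ hθ v
    refine ge_of_tendsto' (hq θ hθ v) fun N => Finset.sum_nonneg fun n _ =>
      mul_nonneg (hPSD n v) (pow_nonneg (hxnn θ) n)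
  have part2 : ∀ θ₁ θ₂ : ℝ, 0 ≤ θ₁ → θ₁ ≤ θ₂ → θ₂ ≤ Real.pi →
      PSD (C θ₁ - C θ₂) := by
    intro θ₁ θ₂ h0 h12 h2π v
    have hθ₁ : θ₁ ∈ Set.Icc (0:ℝ) Real.pi := ⟨h0, h12.trans h2π⟩
    have hθ₂ : θ₂ ∈ Set.Icc (0:ℝ) Real.pi := ⟨h0.trans h12, h2π⟩
    have hxle : 1 + Real.cos θ₂ ≤ 1 + Real.cos θ₁ := by
      have := Real.cos_le_cos_of_nonneg_of_le_pi h0 h2π h12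
      linarith
    have hdiff : Tendsto (fun N => (∑ n ∈ Finset.range N,
          (v ⬝ᵥ (B n).mulVec v) * (1 + Real.cos θ₁) ^ n) -
        ∑ n ∈ Finset.range N, (v ⬝ᵥ (B n).mulVec v) * (1 + Real.cos θ₂) ^ n)
        atTop (nhds (v ⬝ᵥ (C θ₁).mulVec v - v ⬝ᵥ (C θ₂).mulVec v)) :=
      (hq θ₁ hθ₁ v).sub (hq θ₂ hθ₂ v)
    have hnn : 0 ≤ v ⬝ᵥ (C θ₁).mulVec v - v ⬝ᵥ (C θ₂).mulVec v := by
      refine ge_of_tendsto' hdiff fun N => ?_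
      rw [← Finset.sum_sub_distrib]
      refine Finset.sum_nonneg fun n _ => ?_
      rw [← mul_sub]
      exact mul_nonneg (hPSD n v)
        (sub_nonneg.2 (pow_le_pow_left₀ (hxnn θ₂) hxle n))
    rw [Matrix.sub_mulVec, dotProduct_sub]
    exact hnn
  refine ⟨part1, part2, ?_⟩
  intro θ hθ D hD v
  set g : ℝ → ℝ := fun t => v ⬝ᵥ (C t).mulVec v with hg
  have hgd : HasDerivAt g (v ⬝ᵥ D.mulVec v) θ := by
    have h1 : HasDerivAt (fun t => ∑ i, ∑ j, v i * (C t i j * v j))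
        (∑ i, ∑ j, v i * (D i j * v j)) θ := by
      refine HasDerivAt.fun_sum fun i _ => HasDerivAt.fun_sum fun j _ => ?_
      exact ((hD i j).mul_const (v j)).const_mul (v i)
    have he : (fun t => ∑ i, ∑ j, v i * (C t i j * v j)) = g := by
      funext t
      simp [hg, dotProduct, mulVec, Finset.mul_sum]
    have he2 : (∑ i, ∑ j, v i * (D i j * v j)) = v ⬝ᵥ D.mulVec v := by
      simp [dotProduct, mulVec, Finset.mul_sum]
    rw [he, he2] at h1
    exact h1
  have hanti : ∀ t ∈ Set.Ioo θ Real.pi, g t ≤ g θ := by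
    intro t ht
    have := part2 θ t hθ.1.le ht.1.le ht.2.le v
    rw [Matrix.sub_mulVec, dotProduct_sub] at this
    linarith
  have hslope : Tendsto (slope g θ) (nhdsWithin θ (Set.Ioi θ))
      (nhds (v ⬝ᵥ D.mulVec v)) :=
    (hasDerivAt_iff_tendsto_slope.mp hgd).mono_left
      (nhdsWithin_mono θ (fun y hy => (ne_of_gt hy : y ≠ θ)))
  have hd : v ⬝ᵥ D.mulVec v ≤ 0 := by
    refine le_of_tendsto hslope ?_
    filter_upwards [Ioo_mem_nhdsGT_of_mem ⟨le_refl θ, hθ.2⟩] with t ht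
    rw [slope_def_field]
    apply div_nonpos_of_nonpos_of_nonneg
    · linarith [hanti t ht]
    · linarith [ht.1]
  rw [Matrix.neg_mulVec, dotProduct_neg]
  linarith
end
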